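/- arXiv:1705.03296 — 6 statements merged into one kernel-verified Lean document; each statement's English description precedes it below -/
import Mathlib

section
/- Let 1 < p < ∞, let (Ω, μ) be a measure space with L^p(Ω, μ; ℂ) ≠ {0}, and let 𝒢 = (V, ω) be a connected finite weighted graph with all degrees positive. Then π_{p,𝒢}(L^p(Ω, μ; ℂ)) = π_{p,𝒢}(ℂ). -/
open scoped BigOperators
open Finset MeasureTheory

noncomputable section

variable {V : Type*}

def wdeg [Fintype V] (ω : V → V → ℝ) (s : V) : ℝ := ∑ t, ω s t

def nu [Fintype V] (ω : V → V → ℝ) (s : V) : ℝ := wdeg ω s / ∑ t, wdeg ω t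

def edgeP [Fintype V] (ω : V → V → ℝ) (s t : V) : ℝ := ω s t / ∑ u, ∑ v, ω u v

def SymmW (ω : V → V → ℝ) : Prop := ∀ s t, ω s t = ω t s

def NonnegW (ω : V → V → ℝ) : Prop := ∀ s t, 0 ≤ ω s t

def ConnW (ω : V → V → ℝ) : Prop := (SimpleGraph.fromRel fun s t => 0 < ω s t).Connected

def lpNormW [Fintype V] (ω : V → V → ℝ) (p : ℝ) {X : Type*} [NormedAddCommGroup X]
    (f : V → X) : ℝ := (∑ s, nu ω s * ‖f s‖ ^ p) ^ (1 / p)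

def gradNormW [Fintype V] (ω : V → V → ℝ) (p : ℝ) {X : Type*} [NormedAddCommGroup X]
    (f : V → X) : ℝ := (∑ s, ∑ t, edgeP ω s t * ‖f t - f s‖ ^ p) ^ (1 / p)

def poincareConst [Fintype V] (ω : V → V → ℝ) (p : ℝ) (X : Type*) [NormedAddCommGroup X] : ℝ :=
  sInf {π : ℝ | 0 ≤ π ∧
    ∀ f : V → X, (⨅ x : X, lpNormW ω p fun s => f s - x) ≤ π * gradNormW ω p f}

def markovW [Fintype V] (ω : V → V → ℝ) {X : Type*} [AddCommGroup X] [Module ℝ X]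
    (f : V → X) (s : V) : X := (wdeg ω s)⁻¹ • ∑ t, ω s t • f t

section Aux

variable {V : Type*} [Fintype V] {p : ℝ} {ω : V → V → ℝ}

lemma nu_nonneg (hnn : NonnegW ω) (s : V) : 0 ≤ nu ω s := by
  refine div_nonneg ?_ ?_
  · exact Finset.sum_nonneg fun t _ => hnn s t
  · exact Finset.sum_nonneg fun t _ => Finset.sum_nonneg fun u _ => hnn t u

lemma nu_pos (hnn : NonnegW ω) (hdeg : ∀ s, 0 < wdeg ω s) (s : V) : 0 < nu ω s := by
  refine div_pos (hdeg s) ?_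
  have : Nonempty V := ⟨s⟩
  exact Finset.sum_pos (fun t _ => hdeg t) Finset.univ_nonempty

lemma edgeP_nonneg (hnn : NonnegW ω) (s t : V) : 0 ≤ edgeP ω s t := by
  refine div_nonneg (hnn s t) ?_
  exact Finset.sum_nonneg fun u _ => Finset.sum_nonneg fun v _ => hnn u v

lemma lpNormW_nonneg (hnn : NonnegW ω) {X : Type*} [NormedAddCommGroup X] (f : V → X) :
    0 ≤ lpNormW ω p f := by
  refine Real.rpow_nonneg (Finset.sum_nonneg fun s _ => ?_) _
  exact mul_nonneg (nu_nonneg hnn s) (Real.rpow_nonneg (norm_nonneg _) _)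

lemma gradNormW_nonneg (hnn : NonnegW ω) {X : Type*} [NormedAddCommGroup X] (f : V → X) :
    0 ≤ gradNormW ω p f := by
  refine Real.rpow_nonneg (Finset.sum_nonneg fun s _ => Finset.sum_nonneg fun t _ => ?_) _
  exact mul_nonneg (edgeP_nonneg hnn s t) (Real.rpow_nonneg (norm_nonneg _) _)

lemma lpNormW_rpow (hp0 : 0 < p) (hnn : NonnegW ω) {X : Type*} [NormedAddCommGroup X]
    (f : V → X) : lpNormW ω p f ^ p = ∑ s, nu ω s * ‖f s‖ ^ p := by
  have hs : 0 ≤ ∑ s, nu ω s * ‖f s‖ ^ p :=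
    Finset.sum_nonneg fun s _ =>
      mul_nonneg (nu_nonneg hnn s) (Real.rpow_nonneg (norm_nonneg _) _)
  rw [lpNormW, ← Real.rpow_mul hs, one_div, inv_mul_cancel₀ hp0.ne', Real.rpow_one]

lemma gradNormW_rpow (hp0 : 0 < p) (hnn : NonnegW ω) {X : Type*} [NormedAddCommGroup X]
    (f : V → X) : gradNormW ω p f ^ p = ∑ s, ∑ t, edgeP ω s t * ‖f t - f s‖ ^ p := by
  have hs : 0 ≤ ∑ s, ∑ t, edgeP ω s t * ‖f t - f s‖ ^ p :=
    Finset.sum_nonneg fun s _ => Finset.sum_nonneg fun t _ =>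
      mul_nonneg (edgeP_nonneg hnn s t) (Real.rpow_nonneg (norm_nonneg _) _)
  rw [gradNormW, ← Real.rpow_mul hs, one_div, inv_mul_cancel₀ hp0.ne', Real.rpow_one]

lemma iInf_lpNormW_nonneg (hnn : NonnegW ω) {X : Type*} [NormedAddCommGroup X] (f : V → X) :
    0 ≤ ⨅ x : X, lpNormW ω p fun s => f s - x :=
  Real.iInf_nonneg fun _ => lpNormW_nonneg hnn _

lemma bddBelow_lpNormW (hnn : NonnegW ω) {X : Type*} [NormedAddCommGroup X] (f : V → X) :
    BddBelow (Set.range fun x : X => lpNormW ω p fun s => f s - x) := by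
  refine ⟨0, ?_⟩
  rintro y ⟨x, rfl⟩
  exact lpNormW_nonneg hnn _

end Aux

section LpNorm

variable {p : ℝ} {Ω : Type*} [MeasurableSpace Ω] {μ : Measure Ω}

lemma Lp_norm_rpow (hp : 0 < p) [Fact (1 ≤ ENNReal.ofReal p)]
    (y : Lp ℂ (ENNReal.ofReal p) μ) : ‖y‖ ^ p = ∫ a, ‖y a‖ ^ p ∂μ := by
  have hq0 : (ENNReal.ofReal p) ≠ 0 := by
    simp [ENNReal.ofReal_eq_zero, not_le, hp]
  have hqt : (ENNReal.ofReal p) ≠ ⊤ := ENNReal.ofReal_ne_top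
  have h := (Lp.memLp y).eLpNorm_eq_integral_rpow_norm hq0 hqt
  simp only [ENNReal.toReal_ofReal hp.le] at h
  have hint : 0 ≤ ∫ a, ‖y a‖ ^ p ∂μ :=
    integral_nonneg fun a => Real.rpow_nonneg (norm_nonneg _) _
  rw [Lp.norm_def, h, ENNReal.toReal_ofReal (Real.rpow_nonneg hint _),
    ← Real.rpow_mul hint, inv_mul_cancel₀ hp.ne', Real.rpow_one]

lemma Lp_norm_rpow_of_ae (hp : 0 < p) [Fact (1 ≤ ENNReal.ofReal p)]
    (y : Lp ℂ (ENNReal.ofReal p) μ) {z : Ω → ℂ} (hz : (y : Ω → ℂ) =ᵐ[μ] z) :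
    ‖y‖ ^ p = ∫ a, ‖z a‖ ^ p ∂μ := by
  rw [Lp_norm_rpow hp y]
  exact integral_congr_ae (hz.fun_comp fun c => ‖c‖ ^ p)

end LpNorm
section Easy

variable {p : ℝ} {Ω : Type*} [MeasurableSpace Ω] {μ : Measure Ω}
variable {V : Type*} [Fintype V] {ω : V → V → ℝ}

lemma scalar_ineq_of_Lp (hp : 1 < p) [Fact (1 ≤ ENNReal.ofReal p)]
    [Nontrivial (Lp ℂ (ENNReal.ofReal p) μ)]
    (hnn : NonnegW ω) {π : ℝ}
    (hX : ∀ f : V → Lp ℂ (ENNReal.ofReal p) μ,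
      (⨅ x : Lp ℂ (ENNReal.ofReal p) μ, lpNormW ω p fun s => f s - x) ≤ π * gradNormW ω p f)
    (f : V → ℂ) :
    (⨅ c : ℂ, lpNormW ω p fun s => f s - c) ≤ π * gradNormW ω p f := by
  classical
  have hp0 : 0 < p := zero_lt_one.trans hp
  have hq0 : (ENNReal.ofReal p) ≠ 0 := by simp [ENNReal.ofReal_eq_zero, not_le, hp0]
  have hqt : (ENNReal.ofReal p) ≠ ⊤ := ENNReal.ofReal_ne_top
  -- a unit vector in Lp
  obtain ⟨y, hy⟩ := exists_ne (0 : Lp ℂ (ENNReal.ofReal p) μ)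
  set g : Lp ℂ (ENNReal.ofReal p) μ := (‖y‖⁻¹ : ℂ) • y with hg_def
  have hgnorm : ‖g‖ = 1 := by
    rw [hg_def, norm_smul, norm_inv, Complex.norm_real, Real.norm_eq_abs,
      abs_of_nonneg (norm_nonneg y), inv_mul_cancel₀ (norm_ne_zero_iff.mpr hy)]
  set F : V → Lp ℂ (ENNReal.ofReal p) μ := fun s => f s • g with hF_def
  -- gradient norms agree
  have hgrad : gradNormW ω p F = gradNormW ω p f := by
    unfold gradNormW
    congr 1
    refine Finset.sum_congr rfl fun s _ => Finset.sum_congr rfl fun t _ => ?_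
    have : ‖F t - F s‖ = ‖f t - f s‖ := by
      rw [hF_def]
      simp only
      rw [← sub_smul, norm_smul, hgnorm, mul_one]
    rw [this]
  set m : ℝ := ⨅ c : ℂ, lpNormW ω p fun s => f s - c with hm_def
  have hm0 : 0 ≤ m := iInf_lpNormW_nonneg hnn f
  -- the key pointwise estimate
  have hkey : ∀ x : Lp ℂ (ENNReal.ofReal p) μ, m ≤ lpNormW ω p fun s => F s - x := by
    intro x
    have hMle : ∀ c : ℂ, m ^ p ≤ ∑ s, nu ω s * ‖f s - c‖ ^ p := by
      intro c
      have h1 : m ≤ lpNormW ω p fun s => f s - c := ciInf_le (bddBelow_lpNormW hnn f) c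
      calc m ^ p ≤ (lpNormW ω p fun s => f s - c) ^ p :=
            Real.rpow_le_rpow hm0 h1 hp0.le
        _ = ∑ s, nu ω s * ‖f s - c‖ ^ p := lpNormW_rpow hp0 hnn _
    -- pointwise bound
    have hpt : ∀ a : Ω, m ^ p * ‖(g : Ω → ℂ) a‖ ^ p ≤
        ∑ s, nu ω s * ‖f s * (g : Ω → ℂ) a - (x : Ω → ℂ) a‖ ^ p := by
      intro a
      by_cases hga : (g : Ω → ℂ) a = 0
      · rw [hga]
        simp only [norm_zero]
        rw [Real.zero_rpow hp0.ne', mul_zero]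
        exact Finset.sum_nonneg fun s _ =>
          mul_nonneg (nu_nonneg hnn s) (Real.rpow_nonneg (norm_nonneg _) _)
      · set c : ℂ := (x : Ω → ℂ) a / (g : Ω → ℂ) a with hc_def
        have hfs : ∀ s : V, ‖f s * (g : Ω → ℂ) a - (x : Ω → ℂ) a‖ ^ p
            = ‖(g : Ω → ℂ) a‖ ^ p * ‖f s - c‖ ^ p := by
          intro s
          have : f s * (g : Ω → ℂ) a - (x : Ω → ℂ) a = (g : Ω → ℂ) a * (f s - c) := by
            rw [hc_def]
            field_simp
          rw [this, norm_mul, Real.mul_rpow (norm_nonneg _) (norm_nonneg _)]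
        calc m ^ p * ‖(g : Ω → ℂ) a‖ ^ p
            ≤ (∑ s, nu ω s * ‖f s - c‖ ^ p) * ‖(g : Ω → ℂ) a‖ ^ p := by
              exact mul_le_mul_of_nonneg_right (hMle c) (Real.rpow_nonneg (norm_nonneg _) _)
          _ = ∑ s, nu ω s * ‖f s * (g : Ω → ℂ) a - (x : Ω → ℂ) a‖ ^ p := by
              rw [Finset.sum_mul]
              refine Finset.sum_congr rfl fun s _ => ?_
              rw [hfs s]; ring
    -- integrability of each summand
    have hint : ∀ s : V, Integrable
        (fun a => ‖f s * (g : Ω → ℂ) a - (x : Ω → ℂ) a‖ ^ p) μ := by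
      intro s
      have h1 : MemLp (fun a => f s * (g : Ω → ℂ) a - (x : Ω → ℂ) a) (ENNReal.ofReal p) μ :=
        ((Lp.memLp g).const_mul (f s)).sub (Lp.memLp x)
      have h2 := h1.integrable_norm_rpow hq0 hqt
      simpa [ENNReal.toReal_ofReal hp0.le] using h2
    -- the norm computation
    have hcomp : (lpNormW ω p fun s => F s - x) ^ p
        = ∫ a, ∑ s, nu ω s * ‖f s * (g : Ω → ℂ) a - (x : Ω → ℂ) a‖ ^ p ∂μ := by
      rw [lpNormW_rpow hp0 hnn]
      rw [integral_finset_sum _ fun s _ => (hint s).const_mul (nu ω s)]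
      refine Finset.sum_congr rfl fun s _ => ?_
      rw [integral_const_mul]
      congr 1
      refine Lp_norm_rpow_of_ae hp0 (F s - x) ?_
      filter_upwards [Lp.coeFn_sub (F s) x, Lp.coeFn_smul (f s) g] with a h1 h2
      rw [h1]
      simp only [Pi.sub_apply]
      rw [hF_def]
      simp only
      rw [h2]
      simp [smul_eq_mul]
    -- lower bound on the integral
    have hg_int : Integrable (fun a => ‖(g : Ω → ℂ) a‖ ^ p) μ := by
      have := (Lp.memLp g).integrable_norm_rpow hq0 hqt
      simpa [ENNReal.toReal_ofReal hp0.le] using this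
    have hgip : ∫ a, ‖(g : Ω → ℂ) a‖ ^ p ∂μ = 1 := by
      have := Lp_norm_rpow hp0 g
      rw [hgnorm, Real.one_rpow] at this
      exact this.symm
    have hlow : m ^ p ≤ (lpNormW ω p fun s => F s - x) ^ p := by
      rw [hcomp]
      calc m ^ p = ∫ a, m ^ p * ‖(g : Ω → ℂ) a‖ ^ p ∂μ := by
            rw [integral_const_mul, hgip, mul_one]
        _ ≤ ∫ a, ∑ s, nu ω s * ‖f s * (g : Ω → ℂ) a - (x : Ω → ℂ) a‖ ^ p ∂μ := by
            refine integral_mono (hg_int.const_mul _)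
              (integrable_finset_sum _ fun s _ => (hint s).const_mul (nu ω s)) hpt
    by_contra hcon
    push_neg at hcon
    have := Real.rpow_lt_rpow (lpNormW_nonneg hnn _) hcon hp0
    linarith
  calc m ≤ ⨅ x : Lp ℂ (ENNReal.ofReal p) μ, lpNormW ω p fun s => F s - x := le_ciInf hkey
    _ ≤ π * gradNormW ω p F := hX F
    _ = π * gradNormW ω p f := by rw [hgrad]

end Easy
section Hard

open Filter Topology

variable {p : ℝ} {Ω : Type*} [MeasurableSpace Ω] {μ : Measure Ω}
variable {V : Type*} [Fintype V] {ω : V → V → ℝ}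

lemma Lp_ineq_of_scalar (hp : 1 < p) [Fact (1 ≤ ENNReal.ofReal p)]
    [Nonempty V]
    (hnn : NonnegW ω) (hdeg : ∀ s, 0 < wdeg ω s) {π : ℝ} (hπ0 : 0 ≤ π)
    (hsc : ∀ f : V → ℂ, (⨅ c : ℂ, lpNormW ω p fun s => f s - c) ≤ π * gradNormW ω p f)
    (f : V → Lp ℂ (ENNReal.ofReal p) μ) :
    (⨅ x : Lp ℂ (ENNReal.ofReal p) μ, lpNormW ω p fun s => f s - x)
      ≤ π * gradNormW ω p f := by
  classical
  have hp0 : 0 < p := zero_lt_one.trans hp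
  have hq0 : (ENNReal.ofReal p) ≠ 0 := by simp [ENNReal.ofReal_eq_zero, not_le, hp0]
  have hqt : (ENNReal.ofReal p) ≠ ⊤ := ENNReal.ofReal_ne_top
  obtain ⟨s0⟩ := ‹Nonempty V›
  -- measurable representatives
  set g : V → Ω → ℂ := fun s => (Lp.aestronglyMeasurable (f s)).mk _ with hg_def
  have hg_meas : ∀ s, Measurable (g s) := fun s =>
    (Lp.aestronglyMeasurable (f s)).stronglyMeasurable_mk.measurable
  have hg_ae : ∀ s, (f s : Ω → ℂ) =ᵐ[μ] g s := fun s =>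
    (Lp.aestronglyMeasurable (f s)).ae_eq_mk
  have hgLp : ∀ s, MemLp (g s) (ENNReal.ofReal p) μ := fun s =>
    (Lp.memLp (f s)).ae_eq (hg_ae s)
  -- dense sequence with first term 0
  set D : ℕ → ℂ := fun n => Nat.casesOn n 0 (TopologicalSpace.denseSeq ℂ) with hD_def
  have hD0 : D 0 = 0 := rfl
  have hDdense : DenseRange D := by
    have h1 : Set.range (TopologicalSpace.denseSeq ℂ) ⊆ Set.range D := by
      rintro c ⟨n, rfl⟩; exact ⟨n + 1, rfl⟩
    exact (TopologicalSpace.denseRange_denseSeq ℂ).mono h1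
  set S : Ω → ℂ → ℝ := fun a c => ∑ s, nu ω s * ‖g s a - c‖ ^ p with hS_def
  set G : Ω → ℝ := fun a => ∑ s, nu ω s * ‖g s a‖ ^ p with hG_def
  set I : Ω → ℝ := fun a => ⨅ n : ℕ, S a (D n) with hI_def
  set grad2 : Ω → ℝ := fun a => ∑ s, ∑ t, edgeP ω s t * ‖g t a - g s a‖ ^ p with hgrad2_def
  have hS_nonneg : ∀ a c, 0 ≤ S a c := fun a c =>
    Finset.sum_nonneg fun s _ =>
      mul_nonneg (nu_nonneg hnn s) (Real.rpow_nonneg (norm_nonneg _) _)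
  have hG_nonneg : ∀ a, 0 ≤ G a := fun a =>
    Finset.sum_nonneg fun s _ =>
      mul_nonneg (nu_nonneg hnn s) (Real.rpow_nonneg (norm_nonneg _) _)
  have hS0 : ∀ a, S a 0 = G a := by
    intro a; simp only [hS_def, hG_def, sub_zero]
  have hSbdd : ∀ a, BddBelow (Set.range fun n : ℕ => S a (D n)) := fun a =>
    ⟨0, by rintro y ⟨n, rfl⟩; exact hS_nonneg a _⟩
  have hI_le : ∀ (a) (n : ℕ), I a ≤ S a (D n) := fun a n => ciInf_le (hSbdd a) n
  have hI_nonneg : ∀ a, 0 ≤ I a := fun a => Real.iInf_nonneg fun n => hS_nonneg a _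
  have hS_meas : ∀ c, Measurable fun a => S a c := by
    intro c
    simp only [hS_def]
    refine Finset.measurable_sum _ fun s _ => ?_
    exact ((Real.continuous_rpow_const hp0.le).measurable.comp
      ((hg_meas s).sub measurable_const).norm).const_mul _
  have hG_meas : Measurable G := by
    simp only [hG_def]
    refine Finset.measurable_sum _ fun s _ => ?_
    exact ((Real.continuous_rpow_const hp0.le).measurable.comp (hg_meas s).norm).const_mul _
  have h_I_meas : Measurable I := by
    simp only [hI_def]
    exact Measurable.iInf fun n => hS_meas (D n)
  have hnorm_int : ∀ h : Ω → ℂ, MemLp h (ENNReal.ofReal p) μ →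
      Integrable (fun a => ‖h a‖ ^ p) μ := by
    intro h hh
    have := hh.integrable_norm_rpow hq0 hqt
    simpa [ENNReal.toReal_ofReal hp0.le] using this
  have hG_int : Integrable G μ := by
    simp only [hG_def]
    exact integrable_finset_sum _ fun s _ => (hnorm_int _ (hgLp s)).const_mul _
  have hgrad2_int : Integrable grad2 μ := by
    simp only [hgrad2_def]
    exact integrable_finset_sum _ fun s _ => integrable_finset_sum _ fun t _ =>
      (hnorm_int (fun a => g t a - g s a) ((hgLp t).sub (hgLp s))).const_mul _
  have h_I_int : Integrable I μ := by
    refine hG_int.mono' h_I_meas.aestronglyMeasurable (ae_of_all _ fun a => ?_)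
    rw [Real.norm_eq_abs, abs_of_nonneg (hI_nonneg a)]
    calc I a ≤ S a (D 0) := hI_le a 0
      _ = G a := by rw [hD0, hS0]
  -- continuity of S a
  have hScont : ∀ a, Continuous fun c => S a c := by
    intro a
    simp only [hS_def]
    refine continuous_finset_sum _ fun s _ => ?_
    exact continuous_const.mul
      (((continuous_const.sub continuous_id).norm).rpow_const fun _ => Or.inr hp0.le)
  -- pointwise scalar Poincaré bound
  have h_pt : ∀ a, I a ≤ π ^ p * grad2 a := by
    intro a
    set γ : ℝ := π * gradNormW ω p (fun s => g s a) with hγ_def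
    have hγ0 : 0 ≤ γ := mul_nonneg hπ0 (gradNormW_nonneg hnn _)
    have hstep : ∀ δ : ℝ, 0 < δ → I a ≤ (γ + δ) ^ p := by
      intro δ hδ
      have hinf : (⨅ c : ℂ, lpNormW ω p fun s => g s a - c) ≤ γ := hsc fun s => g s a
      have hlt : (⨅ c : ℂ, lpNormW ω p fun s => g s a - c) < γ + δ / 2 :=
        lt_of_le_of_lt hinf (by linarith)
      obtain ⟨c, hc⟩ := exists_lt_of_ciInf_lt hlt
      have hSc : S a c < (γ + δ) ^ p := by
        have h1 : S a c = (lpNormW ω p fun s => g s a - c) ^ p := by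
          rw [lpNormW_rpow hp0 hnn]
        have h2 : (lpNormW ω p fun s => g s a - c) ^ p < (γ + δ / 2) ^ p :=
          Real.rpow_lt_rpow (lpNormW_nonneg hnn _) hc hp0
        have h3 : (γ + δ / 2) ^ p ≤ (γ + δ) ^ p :=
          Real.rpow_le_rpow (by linarith) (by linarith) hp0.le
        rw [h1]; exact h2.trans_le h3
      have hopen : IsOpen {c' : ℂ | S a c' < (γ + δ) ^ p} :=
        isOpen_lt (hScont a) continuous_const
      obtain ⟨n, hn⟩ := hDdense.exists_mem_open hopen ⟨c, hSc⟩
      exact (hI_le a n).trans hn.le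
    have hlim : Tendsto (fun δ : ℝ => (γ + δ) ^ p) (nhdsWithin 0 (Set.Ioi 0))
        (nhds (γ ^ p)) := by
      have h1 : Continuous fun δ : ℝ => (γ + δ) ^ p :=
        (continuous_const.add continuous_id).rpow_const fun _ => Or.inr hp0.le
      have h2 := h1.tendsto 0
      rw [add_zero] at h2
      exact h2.mono_left nhdsWithin_le_nhds
    have hIγ : I a ≤ γ ^ p := by
      refine ge_of_tendsto hlim ?_
      filter_upwards [self_mem_nhdsWithin] with δ hδ
      exact hstep δ hδ
    calc I a ≤ γ ^ p := hIγ
      _ = π ^ p * (gradNormW ω p fun s => g s a) ^ p :=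
          Real.mul_rpow hπ0 (gradNormW_nonneg hnn _)
      _ = π ^ p * grad2 a := by rw [gradNormW_rpow hp0 hnn]
  -- identification of the gradient integral
  have hsub_ae : ∀ s t : V, ((f t - f s : Lp ℂ (ENNReal.ofReal p) μ) : Ω → ℂ)
      =ᵐ[μ] fun a => g t a - g s a := by
    intro s t
    filter_upwards [Lp.coeFn_sub (f t) (f s), hg_ae t, hg_ae s] with a h1 h2 h3
    rw [h1, Pi.sub_apply, h2, h3]
  have h_grad_pow : ∫ a, grad2 a ∂μ = gradNormW ω p f ^ p := by
    rw [gradNormW_rpow hp0 hnn]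
    simp only [hgrad2_def]
    rw [integral_finset_sum _ fun s _ => integrable_finset_sum _ fun t _ =>
      (hnorm_int (fun a => g t a - g s a) ((hgLp t).sub (hgLp s))).const_mul _]
    refine Finset.sum_congr rfl fun s _ => ?_
    rw [integral_finset_sum _ fun t _ => (hnorm_int (fun a => g t a - g s a) ((hgLp t).sub (hgLp s))).const_mul _]
    refine Finset.sum_congr rfl fun t _ => ?_
    rw [integral_const_mul]
    congr 1
    exact (Lp_norm_rpow_of_ae hp0 (f t - f s) (hsub_ae s t)).symm
  have h_int_I_le : ∫ a, I a ∂μ ≤ π ^ p * gradNormW ω p f ^ p := by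
    calc ∫ a, I a ∂μ ≤ ∫ a, π ^ p * grad2 a ∂μ :=
          integral_mono h_I_int (hgrad2_int.const_mul _) h_pt
      _ = π ^ p * ∫ a, grad2 a ∂μ := integral_const_mul _ _
      _ = π ^ p * gradNormW ω p f ^ p := by rw [h_grad_pow]
  -- the key estimate for each ε > 0
  have key : ∀ ε : ℝ, 0 < ε →
      (⨅ x : Lp ℂ (ENNReal.ofReal p) μ, lpNormW ω p fun s => f s - x) ^ p
        ≤ π ^ p * gradNormW ω p f ^ p + ε * ∫ a, G a ∂μ := by
    intro ε hε
    have hex : ∀ a, ∃ n : ℕ, S a (D n) ≤ I a + ε * G a := by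
      intro a
      rcases eq_or_lt_of_le (hG_nonneg a) with h | h
      · refine ⟨0, ?_⟩
        rw [hD0, hS0, ← h, mul_zero, add_zero]
        exact hI_nonneg a
      · have hlt : I a < I a + ε * G a := lt_add_of_pos_right _ (mul_pos hε h)
        obtain ⟨n, hn⟩ := exists_lt_of_ciInf_lt hlt
        exact ⟨n, hn.le⟩
    set xe : Ω → ℂ := fun a => D (Nat.find (hex a)) with hxe_def
    have hxe_spec : ∀ a, S a (xe a) ≤ I a + ε * G a := fun a => Nat.find_spec (hex a)
    have hxe_meas : Measurable xe := by
      simp only [hxe_def]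
      refine measurable_from_top.comp (measurable_find _ fun n => ?_)
      exact measurableSet_le (hS_meas (D n)) (h_I_meas.add (hG_meas.const_mul ε))
    -- membership of xe in Lp
    set C : ℝ := ((1 + ε) / nu ω s0) ^ (1 / p) with hC_def
    have hν0 : 0 < nu ω s0 := nu_pos hnn hdeg s0
    have hC0 : 0 ≤ C := Real.rpow_nonneg (div_nonneg (by linarith) hν0.le) _
    have hGrp : MemLp (fun a => (G a) ^ (1 / p)) (ENNReal.ofReal p) μ := by
      have hmeas : AEStronglyMeasurable (fun a => (G a) ^ (1 / p)) μ :=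
        ((Real.continuous_rpow_const (by positivity)).measurable.comp hG_meas).aestronglyMeasurable
      refine ⟨hmeas, ?_⟩
      have heq : (fun a => (G a) ^ (1 / p)) = fun a => ‖G a‖ ^ (1 / p) := by
        funext a; rw [Real.norm_eq_abs, abs_of_nonneg (hG_nonneg a)]
      rw [heq, eLpNorm_norm_rpow G (by positivity : (0:ℝ) < 1 / p)]
      have hone : ENNReal.ofReal p * ENNReal.ofReal (1 / p) = 1 := by
        rw [← ENNReal.ofReal_mul hp0.le, mul_one_div, div_self hp0.ne', ENNReal.ofReal_one]
      rw [hone]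
      have hG1 : eLpNorm G 1 μ < ⊤ := (memLp_one_iff_integrable.mpr hG_int).2
      exact ENNReal.rpow_lt_top_of_nonneg (by positivity) hG1.ne
    have hB : MemLp (fun a => ‖g s0 a‖ + C * (G a) ^ (1 / p)) (ENNReal.ofReal p) μ :=
      (hgLp s0).norm.add (hGrp.const_mul C)
    have hxe_bound : ∀ a, ‖xe a‖ ≤ ‖g s0 a‖ + C * (G a) ^ (1 / p) := by
      intro a
      have h2 : nu ω s0 * ‖g s0 a - xe a‖ ^ p ≤ S a (xe a) := by
        simp only [hS_def]
        exact Finset.single_le_sum (f := fun s => nu ω s * ‖g s a - xe a‖ ^ p)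
          (fun s _ => mul_nonneg (nu_nonneg hnn s) (Real.rpow_nonneg (norm_nonneg _) _))
          (Finset.mem_univ s0)
      have h3 : I a ≤ G a := by
        calc I a ≤ S a (D 0) := hI_le a 0
          _ = G a := by rw [hD0, hS0]
      have h1 : nu ω s0 * ‖g s0 a - xe a‖ ^ p ≤ (1 + ε) * G a := by
        have := hxe_spec a
        nlinarith [hG_nonneg a]
      have h4 : ‖g s0 a - xe a‖ ^ p ≤ (1 + ε) / nu ω s0 * G a := by
        rw [div_mul_eq_mul_div, le_div_iff₀ hν0, mul_comm]
        exact h1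
      have h5 : ‖g s0 a - xe a‖ ≤ C * (G a) ^ (1 / p) := by
        have h6 : ‖g s0 a - xe a‖ = (‖g s0 a - xe a‖ ^ p) ^ (1 / p) := by
          rw [← Real.rpow_mul (norm_nonneg _), mul_one_div, div_self hp0.ne', Real.rpow_one]
        rw [h6, hC_def, ← Real.mul_rpow (div_nonneg (by linarith) hν0.le) (hG_nonneg a)]
        exact Real.rpow_le_rpow (Real.rpow_nonneg (norm_nonneg _) _) h4 (by positivity)
      calc ‖xe a‖ = ‖g s0 a - (g s0 a - xe a)‖ := by rw [sub_sub_cancel]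
        _ ≤ ‖g s0 a‖ + ‖g s0 a - xe a‖ := norm_sub_le _ _
        _ ≤ ‖g s0 a‖ + C * (G a) ^ (1 / p) := by linarith [h5]
    have hxeLp : MemLp xe (ENNReal.ofReal p) μ := by
      refine hB.of_le hxe_meas.aestronglyMeasurable (ae_of_all _ fun a => ?_)
      rw [Real.norm_eq_abs]
      exact (hxe_bound a).trans (le_abs_self _)
    set X : Lp ℂ (ENNReal.ofReal p) μ := hxeLp.toLp xe with hX_def
    have hXae : (X : Ω → ℂ) =ᵐ[μ] xe := hxeLp.coeFn_toLp
    have hsubX_ae : ∀ s, ((f s - X : Lp ℂ (ENNReal.ofReal p) μ) : Ω → ℂ)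
        =ᵐ[μ] fun a => g s a - xe a := by
      intro s
      filter_upwards [Lp.coeFn_sub (f s) X, hg_ae s, hXae] with a h1 h2 h3
      rw [h1, Pi.sub_apply, h2, h3]
    have hSxe_int : Integrable (fun a => S a (xe a)) μ := by
      simp only [hS_def]
      exact integrable_finset_sum _ fun s _ =>
        (hnorm_int (fun a => g s a - xe a) ((hgLp s).sub hxeLp)).const_mul _
    have hcomp : (lpNormW ω p fun s => f s - X) ^ p = ∫ a, S a (xe a) ∂μ := by
      rw [lpNormW_rpow hp0 hnn]
      simp only [hS_def]
      rw [integral_finset_sum _ fun s _ => (hnorm_int (fun a => g s a - xe a) ((hgLp s).sub hxeLp)).const_mul _]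
      refine Finset.sum_congr rfl fun s _ => ?_
      rw [integral_const_mul]
      congr 1
      exact Lp_norm_rpow_of_ae hp0 (f s - X) (hsubX_ae s)
    have hmain : ∫ a, S a (xe a) ∂μ ≤ π ^ p * gradNormW ω p f ^ p + ε * ∫ a, G a ∂μ := by
      have h1 : ∫ a, S a (xe a) ∂μ ≤ ∫ a, (I a + ε * G a) ∂μ :=
        integral_mono hSxe_int (h_I_int.add (hG_int.const_mul ε)) hxe_spec
      rw [integral_add h_I_int (hG_int.const_mul ε), integral_const_mul] at h1
      linarith [h_int_I_le]
    have hinf_le : (⨅ x : Lp ℂ (ENNReal.ofReal p) μ, lpNormW ω p fun s => f s - x)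
        ≤ lpNormW ω p fun s => f s - X := ciInf_le (bddBelow_lpNormW hnn f) X
    calc (⨅ x : Lp ℂ (ENNReal.ofReal p) μ, lpNormW ω p fun s => f s - x) ^ p
        ≤ (lpNormW ω p fun s => f s - X) ^ p :=
          Real.rpow_le_rpow (iInf_lpNormW_nonneg hnn f) hinf_le hp0.le
      _ = ∫ a, S a (xe a) ∂μ := hcomp
      _ ≤ _ := hmain
  -- conclude by letting ε → 0
  set M : ℝ := ⨅ x : Lp ℂ (ENNReal.ofReal p) μ, lpNormW ω p fun s => f s - x with hM_def
  have hM0 : 0 ≤ M := iInf_lpNormW_nonneg hnn f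
  have hMp : M ^ p ≤ π ^ p * gradNormW ω p f ^ p := by
    have hlim : Tendsto (fun ε : ℝ => π ^ p * gradNormW ω p f ^ p + ε * ∫ a, G a ∂μ)
        (nhdsWithin 0 (Set.Ioi 0)) (nhds (π ^ p * gradNormW ω p f ^ p)) := by
      have h1 : Continuous fun ε : ℝ => π ^ p * gradNormW ω p f ^ p + ε * ∫ a, G a ∂μ :=
        continuous_const.add (continuous_id.mul continuous_const)
      have h2 := h1.tendsto 0
      simp only [zero_mul, add_zero] at h2
      exact h2.mono_left nhdsWithin_le_nhds
    refine ge_of_tendsto hlim ?_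
    filter_upwards [self_mem_nhdsWithin] with ε hε
    exact key ε hε
  have hfin : M ^ p ≤ (π * gradNormW ω p f) ^ p := by
    rw [Real.mul_rpow hπ0 (gradNormW_nonneg hnn f)]
    exact hMp
  by_contra hcon
  push_neg at hcon
  have := Real.rpow_lt_rpow (mul_nonneg hπ0 (gradNormW_nonneg hnn f)) hcon hp0
  linarith

end Hard
/-- For `1 < p < ∞`, a measure space `(Ω, μ)` with `L^p(Ω, μ; ℂ) ≠ {0}`, and a
connected finite weighted graph with positive degrees,
`π_{p,𝒢}(L^p(Ω, μ; ℂ)) = π_{p,𝒢}(ℂ)`. -/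
theorem stmt1 (p : ℝ) (hp : 1 < p)
    {Ω : Type*} [MeasurableSpace Ω] (μ : Measure Ω) [Fact (1 ≤ ENNReal.ofReal p)]
    [Nontrivial (Lp ℂ (ENNReal.ofReal p) μ)]
    {V : Type*} [Fintype V]
    (ω : V → V → ℝ) (hsym : SymmW ω) (hnn : NonnegW ω) (hconn : ConnW ω)
    (hdeg : ∀ s, 0 < wdeg ω s) :
    poincareConst ω p (Lp ℂ (ENNReal.ofReal p) μ) = poincareConst ω p ℂ := by
  have hV : Nonempty V := SimpleGraph.Connected.nonempty hconn
  unfold poincareConst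
  congr 1
  ext π
  simp only [Set.mem_setOf_eq]
  constructor
  · rintro ⟨hπ0, hX⟩
    exact ⟨hπ0, scalar_ineq_of_Lp hp hnn hX⟩
  · rintro ⟨hπ0, hsc⟩
    exact ⟨hπ0, Lp_ineq_of_scalar hp hnn hdeg hπ0 hsc⟩
end
end

section
/- Let 1 < p < ∞ and C > 0, and let X be a complex Banach space satisfying the p-uniform convexity inequality with constant C. Let ε ∈ [0, 1) be such that (1+C)^{1/p} (1−ε) > 1. Then for every connected finite weighted graph 𝒢 = (V, ω) with all degrees positive such that ‖A_𝒢‖_{B(L^p_0(V,ν;X))} ≤ ε, every f ∈ L^p_0(V,ν;X) satisfies ‖f‖_{L^p(V,ν;X)} ≤ (1+C)^{−1/p} (1−ε)^{−1} ‖∇f‖_{L^p(V×V,ℙ;X)}; in particular π_{p,𝒢}(X) ≤ (1+C)^{−1/p} (1−ε)^{−1} < 1. -/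
open scoped BigOperators
open Finset MeasureTheory

noncomputable section

variable {V : Type*}

/-- `X` satisfies the p-uniform convexity inequality with constant `C`: for every finite
probability space and every `X`-valued random variable `U`,
`‖𝔼U‖^p + C·𝔼[‖U − 𝔼U‖^p] ≤ 𝔼[‖U‖^p]`. -/
def PUC (X : Type*) [NormedAddCommGroup X] [Module ℝ X] (p C : ℝ) : Prop :=
  ∀ (n : ℕ) (μ : Fin n → ℝ), (∀ i, 0 ≤ μ i) → (∑ i, μ i) = 1 →
    ∀ U : Fin n → X,
      ‖∑ i, μ i • U i‖ ^ p + C * ∑ i, μ i * ‖U i - ∑ j, μ j • U j‖ ^ p ≤ ∑ i, μ i * ‖U i‖ ^ p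

/-- Weighted Minkowski inequality for finite sums. -/
lemma weighted_minkowski {ι : Type*} [Fintype ι] {X : Type*} [NormedAddCommGroup X]
    {p : ℝ} (hp : 1 ≤ p) (w : ι → ℝ) (hw : ∀ i, 0 ≤ w i) (f g : ι → X) :
    (∑ i, w i * ‖f i + g i‖ ^ p) ^ (1 / p) ≤
      (∑ i, w i * ‖f i‖ ^ p) ^ (1 / p) + (∑ i, w i * ‖g i‖ ^ p) ^ (1 / p) := by
  have hp0 : (0:ℝ) < p := lt_of_lt_of_le one_pos hp
  have hpow : ∀ (i : ι) (c : ℝ), 0 ≤ c → w i * c ^ p = (w i ^ (1/p) * c) ^ p := by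
    intro i c hc
    rw [Real.mul_rpow (Real.rpow_nonneg (hw i) _) hc, ← Real.rpow_mul (hw i),
      one_div, inv_mul_cancel₀ (ne_of_gt hp0), Real.rpow_one]
  have step1 : ∑ i, w i * ‖f i + g i‖ ^ p
      ≤ ∑ i, (w i ^ (1/p) * ‖f i‖ + w i ^ (1/p) * ‖g i‖) ^ p := by
    apply Finset.sum_le_sum
    intro i _
    rw [hpow i _ (norm_nonneg _), ← mul_add]
    exact Real.rpow_le_rpow (mul_nonneg (Real.rpow_nonneg (hw i) _) (norm_nonneg _))
      (mul_le_mul_of_nonneg_left (norm_add_le _ _) (Real.rpow_nonneg (hw i) _)) hp0.le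
  have step2 := Real.Lp_add_le_of_nonneg (s := Finset.univ)
      (f := fun i => w i ^ (1/p) * ‖f i‖) (g := fun i => w i ^ (1/p) * ‖g i‖) hp
      (fun i _ => mul_nonneg (Real.rpow_nonneg (hw i) _) (norm_nonneg _))
      (fun i _ => mul_nonneg (Real.rpow_nonneg (hw i) _) (norm_nonneg _))
  have e1 : ∑ i, (w i ^ (1/p) * ‖f i‖) ^ p = ∑ i, w i * ‖f i‖ ^ p :=
    Finset.sum_congr rfl fun i _ => (hpow i _ (norm_nonneg _)).symm
  have e2 : ∑ i, (w i ^ (1/p) * ‖g i‖) ^ p = ∑ i, w i * ‖g i‖ ^ p :=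
    Finset.sum_congr rfl fun i _ => (hpow i _ (norm_nonneg _)).symm
  calc (∑ i, w i * ‖f i + g i‖ ^ p) ^ (1/p)
      ≤ (∑ i, (w i ^ (1/p) * ‖f i‖ + w i ^ (1/p) * ‖g i‖) ^ p) ^ (1/p) :=
        Real.rpow_le_rpow (Finset.sum_nonneg fun i _ =>
          mul_nonneg (hw i) (Real.rpow_nonneg (norm_nonneg _) _)) step1 (by positivity)
    _ ≤ _ := by rw [← e1, ← e2]; exact step2

lemma root_pow_le {p r s : ℝ} (hp0 : 0 < p) (hr : 0 ≤ r) (hs : 0 ≤ s)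
    (h : r ≤ s ^ (1/p)) : r ^ p ≤ s := by
  have := Real.rpow_le_rpow hr h hp0.le
  rwa [← Real.rpow_mul hs, one_div, inv_mul_cancel₀ (ne_of_gt hp0), Real.rpow_one] at this

/-- small Markov operator on `L^p_0(V,ν;X)` gives a Poincaré inequality with
constant `(1+C)^{-1/p}(1-ε)^{-1} < 1` for a `p`-uniformly convex space `X`. -/
theorem stmt3 (p C : ℝ) (hp : 1 < p) (hC : 0 < C)
    (X : Type*) [NormedAddCommGroup X] [NormedSpace ℂ X] [CompleteSpace X]
    (hX : PUC X p C)
    (ε : ℝ) (hε0 : 0 ≤ ε) (hε1 : ε < 1)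
    (hcond : 1 < (1 + C) ^ (1 / p) * (1 - ε))
    {V : Type*} [Fintype V]
    (ω : V → V → ℝ) (hsym : SymmW ω) (hnn : NonnegW ω) (hconn : ConnW ω)
    (hdeg : ∀ s, 0 < wdeg ω s)
    (hA : ∀ f : V → X, (∑ s, nu ω s • f s) = 0 →
      lpNormW ω p (markovW ω f) ≤ ε * lpNormW ω p f) :
    (∀ f : V → X, (∑ s, nu ω s • f s) = 0 →
        lpNormW ω p f ≤ (1 + C) ^ (-(1 / p)) * (1 - ε)⁻¹ * gradNormW ω p f) ∧
      poincareConst ω p X ≤ (1 + C) ^ (-(1 / p)) * (1 - ε)⁻¹ ∧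
      (1 + C) ^ (-(1 / p)) * (1 - ε)⁻¹ < 1 := by
  classical
  have hp0 : (0:ℝ) < p := lt_trans one_pos hp
  have hp1 : (1:ℝ) ≤ p := le_of_lt hp
  have hne : Nonempty V := hconn.nonempty
  have hε1' : (0:ℝ) < 1 - ε := by linarith
  have hC1 : (0:ℝ) < 1 + C := by linarith
  set W : ℝ := ∑ t, wdeg ω t with hWdef
  have hW : 0 < W := Finset.sum_pos (fun s _ => hdeg s) Finset.univ_nonempty
  have hWW : (∑ u, ∑ v, ω u v) = W := rfl
  have hP : ∀ s t, edgeP ω s t = ω s t / W := fun s t => rfl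
  have hnu : ∀ s, nu ω s = wdeg ω s / W := fun s => rfl
  have hkey1 : ∀ s t, nu ω s * (ω s t / wdeg ω s) = edgeP ω s t := by
    intro s t
    rw [hP, hnu, div_mul_div_comm, mul_comm W (wdeg ω s),
      mul_div_mul_left _ _ (ne_of_gt (hdeg s))]
  have hdegsym : ∀ t, ∑ s, ω s t = wdeg ω t := by
    intro t
    rw [wdeg]
    exact Finset.sum_congr rfl fun s _ => hsym s t
  have hPsum_left : ∀ t, ∑ s, edgeP ω s t = nu ω t := by
    intro t
    simp only [hP, hnu]
    rw [← Finset.sum_div, hdegsym]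
  have hPsum_right : ∀ s, ∑ t, edgeP ω s t = nu ω s := by
    intro s
    simp only [hP, hnu]
    rw [← Finset.sum_div]
    rfl
  have hnusum : ∑ s, nu ω s = 1 := by
    simp only [hnu]
    rw [← Finset.sum_div]
    exact div_self (ne_of_gt hW)
  have hnunn : ∀ s, 0 ≤ nu ω s := fun s => div_nonneg (le_of_lt (hdeg s)) (le_of_lt hW)
  have hPnn : ∀ s t, 0 ≤ edgeP ω s t := fun s t => div_nonneg (hnn s t) hW.le
  set K : ℝ := (1 + C) ^ (-(1/p)) * (1 - ε)⁻¹ with hKdef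
  set D : ℝ := (1 + C) ^ (1/p) * (1 - ε) with hDdef
  have hD1 : 1 < D := hcond
  have hD0 : 0 < D := lt_trans one_pos hD1
  have hKD : K = D⁻¹ := by
    rw [hKdef, hDdef, mul_inv, Real.rpow_neg hC1.le]
  have hK0 : 0 ≤ K := by rw [hKD]; exact inv_nonneg.2 hD0.le
  -- Main Poincaré inequality for mean-zero f
  have main : ∀ f : V → X, (∑ s, nu ω s • f s) = 0 →
      lpNormW ω p f ≤ K * gradNormW ω p f := by
    intro f hf
    set g := markovW ω f with hgdef
    -- pointwise p-uniform convexity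
    have hpc : ∀ s : V, ‖g s - f s‖ ^ p + C * ∑ t, (ω s t / wdeg ω s) * ‖f t - g s‖ ^ p
        ≤ ∑ t, (ω s t / wdeg ω s) * ‖f t - f s‖ ^ p := by
      intro s
      have hd := hdeg s
      set e := (Fintype.equivFin V).symm with he
      have hμnn : ∀ i : Fin (Fintype.card V), 0 ≤ ω s (e i) / wdeg ω s :=
        fun i => div_nonneg (hnn _ _) hd.le
      have hμ1 : ∑ i, ω s (e i) / wdeg ω s = 1 := by
        have h0 : ∑ i, ω s (e i) / wdeg ω s = ∑ t, ω s t / wdeg ω s :=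
          Fintype.sum_equiv e _ _ (fun i => rfl)
        rw [h0, ← Finset.sum_div]
        exact div_self (ne_of_gt hd)
      have hmean : ∑ i, (ω s (e i) / wdeg ω s) • (f (e i) - f s) = g s - f s := by
        have h0 : ∑ i, (ω s (e i) / wdeg ω s) • (f (e i) - f s)
            = ∑ t, (ω s t / wdeg ω s) • (f t - f s) :=
          Fintype.sum_equiv e _ _ (fun i => rfl)
        have h1 : ∀ t, (ω s t / wdeg ω s) • (f t - f s)
            = (wdeg ω s)⁻¹ • (ω s t • f t) - (ω s t / wdeg ω s) • f s := by
          intro t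
          rw [smul_sub, div_eq_inv_mul, mul_smul]
        rw [h0, Finset.sum_congr rfl fun t _ => h1 t, Finset.sum_sub_distrib,
          ← Finset.smul_sum, ← Finset.sum_smul, ← Finset.sum_div,
          (show (∑ i, ω s i) = wdeg ω s from rfl), div_self (ne_of_gt hd), one_smul]
        rfl
      have hUC := hX (Fintype.card V) (fun i => ω s (e i) / wdeg ω s) hμnn hμ1
        (fun i => f (e i) - f s)
      beta_reduce at hUC
      rw [hmean] at hUC
      simp only [sub_sub_sub_cancel_right] at hUC
      have t1 : ∑ i, (ω s (e i) / wdeg ω s) * ‖f (e i) - g s‖ ^ p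
          = ∑ t, (ω s t / wdeg ω s) * ‖f t - g s‖ ^ p :=
        Fintype.sum_equiv e _ _ (fun i => rfl)
      have t2 : ∑ i, (ω s (e i) / wdeg ω s) * ‖f (e i) - f s‖ ^ p
          = ∑ t, (ω s t / wdeg ω s) * ‖f t - f s‖ ^ p :=
        Fintype.sum_equiv e _ _ (fun i => rfl)
      rw [t1, t2] at hUC
      exact hUC
    set a : ℝ := ∑ s, nu ω s * ‖f s - g s‖ ^ p with hadef
    set b : ℝ := ∑ s, ∑ t, edgeP ω s t * ‖f t - g s‖ ^ p with hbdef
    set c : ℝ := ∑ s, ∑ t, edgeP ω s t * ‖f t - f s‖ ^ p with hcdef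
    have key : ∀ (s : V) (q : V → ℝ),
        nu ω s * ∑ t, (ω s t / wdeg ω s) * q t = ∑ t, edgeP ω s t * q t := by
      intro s q
      rw [Finset.mul_sum]
      exact Finset.sum_congr rfl fun t _ => by rw [← mul_assoc, hkey1]
    have habc : a + C * b ≤ c := by
      have expand : ∑ s, (nu ω s * ‖g s - f s‖ ^ p
            + nu ω s * (C * ∑ t, (ω s t / wdeg ω s) * ‖f t - g s‖ ^ p))
          ≤ ∑ s, nu ω s * ∑ t, (ω s t / wdeg ω s) * ‖f t - f s‖ ^ p := by
        apply Finset.sum_le_sum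
        intro s _
        rw [← mul_add]
        exact mul_le_mul_of_nonneg_left (hpc s) (hnunn s)
      rw [Finset.sum_add_distrib] at expand
      have l1 : ∑ s, nu ω s * ‖g s - f s‖ ^ p = a :=
        Finset.sum_congr rfl fun s _ => by rw [norm_sub_rev]
      have l2 : ∑ s, nu ω s * (C * ∑ t, (ω s t / wdeg ω s) * ‖f t - g s‖ ^ p) = C * b := by
        rw [hbdef, Finset.mul_sum]
        exact Finset.sum_congr rfl fun s _ => by
          rw [mul_left_comm, key s (fun t => ‖f t - g s‖ ^ p)]
      have l3 : ∑ s, nu ω s * ∑ t, (ω s t / wdeg ω s) * ‖f t - f s‖ ^ p = c :=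
        Finset.sum_congr rfl fun s _ => key s (fun t => ‖f t - f s‖ ^ p)
      rw [l1, l2, l3] at expand
      exact expand
    set Nf : ℝ := lpNormW ω p f with hNfdef
    set Ng : ℝ := lpNormW ω p g with hNgdef
    have hNg : Ng ≤ ε * Nf := hA f hf
    have hNf0 : 0 ≤ Nf := Real.rpow_nonneg (Finset.sum_nonneg fun s _ =>
      mul_nonneg (hnunn s) (Real.rpow_nonneg (norm_nonneg _) _)) _
    have ha0 : 0 ≤ a := Finset.sum_nonneg fun s _ =>
      mul_nonneg (hnunn s) (Real.rpow_nonneg (norm_nonneg _) _)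
    have hb0 : 0 ≤ b := Finset.sum_nonneg fun s _ => Finset.sum_nonneg fun t _ =>
      mul_nonneg (hPnn s t) (Real.rpow_nonneg (norm_nonneg _) _)
    -- Minkowski 1 : Nf ≤ a^{1/p} + Ng
    have mink1 : Nf ≤ a ^ (1/p) + Ng := by
      have h := weighted_minkowski hp1 (nu ω) hnunn (fun s => f s - g s) g
      have e0 : ∑ s, nu ω s * ‖f s - g s + g s‖ ^ p = ∑ s, nu ω s * ‖f s‖ ^ p := by
        exact Finset.sum_congr rfl fun s _ => by rw [sub_add_cancel]
      rw [e0] at h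
      exact h
    -- Minkowski 2 : Nf ≤ b^{1/p} + Ng
    have mink2 : Nf ≤ b ^ (1/p) + Ng := by
      have h := weighted_minkowski hp1 (fun x : V × V => edgeP ω x.1 x.2)
        (fun x => hPnn x.1 x.2) (fun x => f x.2 - g x.1) (fun x => g x.1)
      have e1 : ∑ x : V × V, edgeP ω x.1 x.2 * ‖(f x.2 - g x.1) + g x.1‖ ^ p
          = ∑ s, nu ω s * ‖f s‖ ^ p := by
        rw [Fintype.sum_prod_type, Finset.sum_comm]
        refine Finset.sum_congr rfl fun t _ => ?_
        show ∑ x, edgeP ω x t * ‖f t - g x + g x‖ ^ p = nu ω t * ‖f t‖ ^ p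
        simp only [sub_add_cancel]
        rw [← Finset.sum_mul, hPsum_left]
      have e2 : ∑ x : V × V, edgeP ω x.1 x.2 * ‖f x.2 - g x.1‖ ^ p = b := by
        rw [Fintype.sum_prod_type]
      have e3 : ∑ x : V × V, edgeP ω x.1 x.2 * ‖g x.1‖ ^ p = ∑ s, nu ω s * ‖g s‖ ^ p := by
        rw [Fintype.sum_prod_type]
        refine Finset.sum_congr rfl fun s _ => ?_
        show ∑ y, edgeP ω s y * ‖g s‖ ^ p = nu ω s * ‖g s‖ ^ p
        rw [← Finset.sum_mul, hPsum_right]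
      rw [e1, e2, e3] at h
      exact h
    have hlow : (1 - ε) * Nf ≤ Nf - Ng := by nlinarith
    have hNfem : (1 - ε) * Nf ≥ 0 := mul_nonneg hε1'.le hNf0
    have hale : ((1 - ε) * Nf) ^ p ≤ a :=
      root_pow_le hp0 hNfem ha0 (by linarith)
    have hble : ((1 - ε) * Nf) ^ p ≤ b :=
      root_pow_le hp0 hNfem hb0 (by linarith)
    have hcle : (1 + C) * ((1 - ε) * Nf) ^ p ≤ c := by nlinarith
    -- take roots
    have hgrad : (1 + C) ^ (1/p) * ((1 - ε) * Nf) ≤ gradNormW ω p f := by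
      have h := Real.rpow_le_rpow (by positivity) hcle (by positivity : (0:ℝ) ≤ 1/p)
      rwa [Real.mul_rpow hC1.le (Real.rpow_nonneg hNfem _), ← Real.rpow_mul hNfem,
        mul_one_div, div_self (ne_of_gt hp0), Real.rpow_one] at h
    have hDNf : D * Nf ≤ gradNormW ω p f := by
      rw [hDdef, mul_assoc]
      exact hgrad
    calc Nf = D⁻¹ * (D * Nf) := by rw [← mul_assoc, inv_mul_cancel₀ (ne_of_gt hD0), one_mul]
      _ ≤ D⁻¹ * gradNormW ω p f := by
          exact mul_le_mul_of_nonneg_left hDNf (inv_nonneg.2 hD0.le)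
      _ = K * gradNormW ω p f := by rw [hKD]
  refine ⟨main, ?_, ?_⟩
  · -- poincareConst bound
    have hmem : K ∈ {π : ℝ | 0 ≤ π ∧
        ∀ f : V → X, (⨅ x : X, lpNormW ω p fun s => f s - x) ≤ π * gradNormW ω p f} := by
      refine ⟨hK0, fun f => ?_⟩
      set x₀ : X := ∑ s, nu ω s • f s with hx0
      have hmean : (∑ s, nu ω s • (f s - x₀)) = 0 := by
        simp only [smul_sub]
        rw [Finset.sum_sub_distrib, ← Finset.sum_smul, hnusum, one_smul, sub_self]
      have h1 := main (fun s => f s - x₀) hmean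
      have hgradeq : gradNormW ω p (fun s => f s - x₀) = gradNormW ω p f := by
        unfold gradNormW
        congr 1
        exact Finset.sum_congr rfl fun s _ => Finset.sum_congr rfl fun t _ => by
          rw [sub_sub_sub_cancel_right]
      rw [hgradeq] at h1
      refine le_trans ?_ h1
      exact ciInf_le ⟨0, fun y hy => by
        obtain ⟨x, rfl⟩ := hy
        exact Real.rpow_nonneg (Finset.sum_nonneg fun s _ =>
          mul_nonneg (hnunn s) (Real.rpow_nonneg (norm_nonneg _) _)) _⟩ x₀
    exact csInf_le ⟨0, fun π hπ => hπ.1⟩ hmem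
  · rw [hKD]
    exact inv_lt_one_of_one_lt₀ hD1
end
end

section
/- Let 1 < p < ∞ and C > 0, let X be a complex Banach space satisfying the p-uniform convexity inequality with constant C, and let 𝒢 = (V, ω) be a finite weighted graph with all degrees positive. Then for every f : V → X: ∑_s ν(s) ‖f(s) − (Af)(s)‖^p ≤ ∑_{s,t} ℙ(s,t) ‖f(s) − f(t)‖^p − C · ∑_{s,t} ℙ(s,t) ‖f(t) − (Af)(s)‖^p. -/
open scoped BigOperators
open Finset MeasureTheory

noncomputable section

variable {V : Type*}

lemma puc_fintype {X : Type*} [NormedAddCommGroup X] [NormedSpace ℂ X] {p C : ℝ}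
    (hX : PUC X p C) {ι : Type*} [Fintype ι] (μ : ι → ℝ) (hμ : ∀ i, 0 ≤ μ i)
    (hsum : ∑ i, μ i = 1) (U : ι → X) :
    ‖∑ i, μ i • U i‖ ^ p + C * ∑ i, μ i * ‖U i - ∑ j, μ j • U j‖ ^ p ≤
      ∑ i, μ i * ‖U i‖ ^ p := by
  classical
  let e := Fintype.equivFin ι
  have key := hX (Fintype.card ι) (fun i => μ (e.symm i)) (fun i => hμ _)
    (by rw [Equiv.sum_comp e.symm μ]; exact hsum) (fun i => U (e.symm i))
  have hE : (∑ j : Fin (Fintype.card ι), μ (e.symm j) • U (e.symm j)) = ∑ j, μ j • U j :=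
    Equiv.sum_comp e.symm fun j => μ j • U j
  rw [hE] at key
  rw [Equiv.sum_comp e.symm (fun i => μ i * ‖U i - ∑ j, μ j • U j‖ ^ p),
    Equiv.sum_comp e.symm (fun i => μ i * ‖U i‖ ^ p)] at key
  exact key

/-- for a `p`-uniformly convex space `X` (constant `C`) and any finite weighted
graph with positive degrees,
`𝔼‖f(Z₀) − Af(Z₀)‖^p ≤ 𝔼‖f(Z₀) − f(Z₁)‖^p − C·𝔼‖f(Z₁) − Af(Z₀)‖^p`. -/
theorem stmt4 (p C : ℝ) (hp : 1 < p) (hC : 0 < C)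
    (X : Type*) [NormedAddCommGroup X] [NormedSpace ℂ X] [CompleteSpace X]
    (hX : PUC X p C)
    {V : Type*} [Fintype V]
    (ω : V → V → ℝ) (hsym : SymmW ω) (hnn : NonnegW ω)
    (hdeg : ∀ s, 0 < wdeg ω s)
    (f : V → X) :
    ∑ s, nu ω s * ‖f s - markovW ω f s‖ ^ p ≤
      (∑ s, ∑ t, edgeP ω s t * ‖f s - f t‖ ^ p)
        - C * ∑ s, ∑ t, edgeP ω s t * ‖f t - markovW ω f s‖ ^ p := by
  classical
  by_cases hV : IsEmpty V
  · simp
  rw [not_isEmpty_iff] at hV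
  have hDpos : (0:ℝ) < ∑ t, wdeg ω t := Finset.sum_pos (fun s _ => hdeg s) Finset.univ_nonempty
  have hnu : ∀ s, 0 ≤ nu ω s := fun s => div_nonneg (hdeg s).le hDpos.le
  set A : V → X := markovW ω f with hA
  have key : ∀ s, ‖f s - A s‖ ^ p + C * ∑ t, (ω s t / wdeg ω s) * ‖f t - A s‖ ^ p ≤
      ∑ t, (ω s t / wdeg ω s) * ‖f s - f t‖ ^ p := by
    intro s
    set μ : V → ℝ := fun t => ω s t / wdeg ω s with hμdef
    have hμ0 : ∀ t, 0 ≤ μ t := fun t => div_nonneg (hnn s t) (hdeg s).le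
    have hμ1 : ∑ t, μ t = 1 := by
      simp only [hμdef, ← Finset.sum_div]
      exact div_self (hdeg s).ne'
    have hE : ∑ t, μ t • (f s - f t) = f s - A s := by
      have h1 : ∀ t, μ t • f t = (wdeg ω s)⁻¹ • (ω s t • f t) := by
        intro t
        rw [smul_smul, hμdef]
        congr 1
        show ω s t / wdeg ω s = (wdeg ω s)⁻¹ * ω s t
        rw [div_eq_mul_inv, mul_comm]
      calc ∑ t, μ t • (f s - f t) = (∑ t, μ t) • f s - ∑ t, μ t • f t := by
            rw [Finset.sum_smul]
            rw [← Finset.sum_sub_distrib]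
            exact Finset.sum_congr rfl fun t _ => smul_sub _ _ _
        _ = f s - A s := by
            rw [hμ1, one_smul]
            congr 1
            simp only [h1, ← Finset.smul_sum]
            rfl
    have h := puc_fintype hX μ hμ0 hμ1 (fun t => f s - f t)
    rw [hE] at h
    have hterm : ∀ t, μ t * ‖(f s - f t) - (f s - A s)‖ ^ p = μ t * ‖f t - A s‖ ^ p := by
      intro t
      congr 2
      rw [show (f s - f t) - (f s - A s) = A s - f t by abel, norm_sub_rev]
    simp only [hterm] at h
    exact h
  have hPE : ∀ s t, nu ω s * (ω s t / wdeg ω s) = edgeP ω s t := by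
    intro s t
    have hD2 : (∑ u, ∑ v, ω u v) = ∑ t, wdeg ω t := rfl
    rw [nu, edgeP, hD2]
    field_simp [(hdeg s).ne', hDpos.ne']
  have step : ∀ s, nu ω s * ‖f s - A s‖ ^ p ≤
      (∑ t, edgeP ω s t * ‖f s - f t‖ ^ p) - C * ∑ t, edgeP ω s t * ‖f t - A s‖ ^ p := by
    intro s
    have h := mul_le_mul_of_nonneg_left (key s) (hnu s)
    have e1 : nu ω s * ∑ t, (ω s t / wdeg ω s) * ‖f s - f t‖ ^ p
        = ∑ t, edgeP ω s t * ‖f s - f t‖ ^ p := by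
      rw [Finset.mul_sum]
      exact Finset.sum_congr rfl fun t _ => by rw [← mul_assoc, hPE]
    have e2 : nu ω s * ∑ t, (ω s t / wdeg ω s) * ‖f t - A s‖ ^ p
        = ∑ t, edgeP ω s t * ‖f t - A s‖ ^ p := by
      rw [Finset.mul_sum]
      exact Finset.sum_congr rfl fun t _ => by rw [← mul_assoc, hPE]
    rw [mul_add, e1] at h
    rw [← e2]
    nlinarith [h]
  calc ∑ s, nu ω s * ‖f s - A s‖ ^ p
      ≤ ∑ s, ((∑ t, edgeP ω s t * ‖f s - f t‖ ^ p)
          - C * ∑ t, edgeP ω s t * ‖f t - A s‖ ^ p) :=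
        Finset.sum_le_sum fun s _ => step s
    _ = (∑ s, ∑ t, edgeP ω s t * ‖f s - f t‖ ^ p)
          - C * ∑ s, ∑ t, edgeP ω s t * ‖f t - A s‖ ^ p := by
        rw [Finset.sum_sub_distrib, Finset.mul_sum]
end
end

section
/- Let p ∈ [2, ∞), let (Ω, μ) be a finite probability space, let (Ω', μ') be a measure space, and let U : Ω → L^p(Ω', μ'; ℂ). Then ‖𝔼U‖_{L^p}^p + 2^{2−p} · 𝔼[‖U − 𝔼U‖_{L^p}^p] ≤ 𝔼[‖U‖_{L^p}^p], where 𝔼 denotes expectation with respect to μ and ‖·‖_{L^p} is the norm of L^p(Ω', μ'; ℂ). -/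
open scoped BigOperators
open Finset MeasureTheory

noncomputable section

/-- tangent line inequality for rpow -/
lemma rpow_tangent {q x y : ℝ} (hq : 1 ≤ q) (hy : 0 ≤ y) (hx : 0 ≤ x) :
    y ^ q + q * y ^ (q - 1) * (x - y) ≤ x ^ q := by
  rcases eq_or_lt_of_le hy with h0 | h0
  · rcases eq_or_lt_of_le hq with h1 | h1
    · simp [← h0, ← h1]
    · rw [← h0]
      rw [Real.zero_rpow (by linarith), Real.zero_rpow (by linarith)]
      simpa using Real.rpow_nonneg hx q
  · have hs : -1 ≤ x / y - 1 := by
      have : 0 ≤ x / y := div_nonneg hx h0.le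
      linarith
    have hb := one_add_mul_self_le_rpow_one_add hs hq
    have key : y ^ q * (1 + q * (x / y - 1)) ≤ y ^ q * (1 + (x / y - 1)) ^ q := by
      apply mul_le_mul_of_nonneg_left _ (Real.rpow_nonneg h0.le q)
      simpa using hb
    have h1 : y ^ q * (1 + (x / y - 1)) ^ q = x ^ q := by
      rw [← Real.mul_rpow h0.le (by linarith)]
      congr 1
      field_simp
      ring
    have h2 : y ^ q * (1 + q * (x / y - 1)) = y ^ q + q * y ^ (q - 1) * (x - y) := by
      have : y ^ q = y ^ (q - 1) * y := by
        rw [← Real.rpow_add_one h0.ne' (q-1)]; ring_nf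
      rw [this]
      field_simp
    rw [h2, h1] at key
    exact key

lemma midpoint_rpow {q x y : ℝ} (hq : 1 ≤ q) (hx : 0 ≤ x) (hy : 0 ≤ y) :
    ((x + y)/2) ^ q ≤ (x ^ q + y ^ q)/2 := by
  have h := (convexOn_rpow hq).2 (Set.mem_Ici.2 hx) (Set.mem_Ici.2 hy)
    (by norm_num : (0:ℝ) ≤ 1/2) (by norm_num : (0:ℝ) ≤ 1/2) (by norm_num)
  simp only [smul_eq_mul] at h
  calc ((x + y)/2) ^ q = ((1:ℝ)/2 * x + 1/2 * y) ^ q := by ring_nf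
    _ ≤ 1/2 * x ^ q + 1/2 * y ^ q := h
    _ = (x ^ q + y ^ q)/2 := by ring

lemma step3 {p A r : ℝ} (hp : 2 ≤ p) (hA : 0 < A) (hr : 2*A ≤ r) :
    A ^ p + (2:ℝ) ^ (2-p) * r ^ p ≤ (r - A) ^ p + p * A ^ (p-1) * r := by
  set f : ℝ → ℝ := fun x => (x - A) ^ p + p * A ^ (p-1) * x - 2 ^ (2-p) * x ^ p with hf
  have hder : ∀ x, 2*A ≤ x →
      HasDerivAt f (p * (x-A) ^ (p-1) * 1 + p * A ^ (p-1) - 2 ^ (2-p) * (p * x ^ (p-1))) x := by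
    intro x hx
    have hxA : x - A ≠ 0 := by nlinarith
    have h1 : HasDerivAt (fun x : ℝ => (x - A) ^ p) (p * (x-A) ^ (p-1) * 1) x :=
      by have h := (Real.hasDerivAt_rpow_const (x := x - A) (p := p) (Or.inl hxA)).comp x ((hasDerivAt_id x).sub_const A); exact h
    have h2 : HasDerivAt (fun x : ℝ => p * A ^ (p-1) * x) (p * A ^ (p-1)) x := by
      simpa using (hasDerivAt_id x).const_mul (p * A ^ (p-1))
    have h3 : HasDerivAt (fun x : ℝ => (2:ℝ) ^ (2-p) * x ^ p) (2 ^ (2-p) * (p * x ^ (p-1))) x :=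
      (Real.hasDerivAt_rpow_const (Or.inr (by linarith))).const_mul _
    exact (h1.add h2).sub h3
  have hderiv_nonneg : ∀ x, 2*A ≤ x →
      0 ≤ p * (x-A) ^ (p-1) * 1 + p * A ^ (p-1) - 2 ^ (2-p) * (p * x ^ (p-1)) := by
    intro x hx
    have hx0 : 0 ≤ x := by nlinarith
    have hxA : 0 ≤ x - A := by nlinarith
    have hmid := midpoint_rpow (q := p-1) (by linarith) hxA hA.le
    have hhalf : ((x - A + A)/2) ^ (p-1) = (x/2) ^ (p-1) := by ring_nf
    have hdiv : (x/2) ^ (p-1) = x ^ (p-1) / 2 ^ (p-1) := Real.div_rpow hx0 (by norm_num : (0:ℝ) ≤ 2) (p-1)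
    have h2p : (2:ℝ) ^ (2-p) * x ^ (p-1) = 2 * (x ^ (p-1) / 2 ^ (p-1)) := by
      rw [show (2:ℝ)^(2-p) = 2 ^ (1 - (p-1)) by ring_nf,
        Real.rpow_sub (by norm_num : (0:ℝ) < 2), Real.rpow_one]
      ring
    have key : 2 ^ (2-p) * x ^ (p-1) ≤ (x-A) ^ (p-1) + A ^ (p-1) := by
      rw [h2p, ← hdiv]
      rw [hhalf] at hmid
      linarith
    have hp0 : 0 < p := by linarith
    nlinarith [key]
  have hmono : MonotoneOn f (Set.Ici (2*A)) := by
    apply monotoneOn_of_deriv_nonneg (convex_Ici _)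
    · exact fun x hx => ((hder x hx).continuousAt).continuousWithinAt
    · intro x hx
      rw [interior_Ici] at hx
      exact ((hder x (le_of_lt hx)).differentiableAt).differentiableWithinAt
    · intro x hx
      rw [interior_Ici] at hx
      rw [(hder x (le_of_lt hx)).deriv]
      exact hderiv_nonneg x (le_of_lt hx)
  have hstart : A ^ p ≤ f (2*A) := by
    have e1 : (2*A - A) = A := by ring
    have e2 : A ^ (p-1) * (2*A) = 2 * A ^ p := by
      rw [show A ^ (p-1) * (2*A) = 2 * (A ^ (p-1) * A) by ring,
        Real.rpow_sub_one hA.ne' p]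
      field_simp
    have e3 : (2:ℝ) ^ (2-p) * (2*A) ^ p = 4 * A ^ p := by
      rw [Real.mul_rpow (by norm_num) hA.le, ← mul_assoc,
        ← Real.rpow_add (by norm_num : (0:ℝ) < 2)]
      norm_num
    simp only [hf, e1]
    rw [show p * A ^ (p-1) * (2*A) = p * (A ^ (p-1) * (2*A)) by ring, e2, e3]
    nlinarith [Real.rpow_nonneg hA.le p]
  have hend := hmono (Set.mem_Ici.2 (le_refl (2*A))) (Set.mem_Ici.2 hr) hr
  have := hstart.trans hend
  simp only [hf] at this
  linarith

lemma mul_self_rpow {x : ℝ} (hx : 0 ≤ x) (q : ℝ) : (x*x) ^ q = x ^ (2*q) := by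
  rw [show x*x = x^(2:ℕ) by ring, ← Real.rpow_natCast_mul hx 2 q]
  norm_num

lemma key_real {p A r t : ℝ} (hp : 2 ≤ p) (hA : 0 ≤ A) (hr : 0 ≤ r)
    (ht1 : -(A*r) ≤ t) (ht2 : t ≤ A*r) :
    A ^ p + p * A ^ (p-2) * t + (2:ℝ) ^ (2-p) * r ^ p ≤ (A*A + 2*t + r*r) ^ (p/2) := by
  have hp0 : (0:ℝ) < p := by linarith
  have hq : (1:ℝ) ≤ p/2 := by linarith
  have hc : (2:ℝ) ^ (2-p) ≤ 1 :=
    Real.rpow_le_one_of_one_le_of_nonpos (by norm_num) (by linarith)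
  rcases eq_or_lt_of_le hA with h0 | h0
  · -- A = 0, hence t = 0
    have ht : t = 0 := by rw [← h0] at ht1 ht2; simp at ht1 ht2; linarith
    rw [← h0, ht]
    rw [Real.zero_rpow hp0.ne']
    have hrr : (r*r) ^ (p/2) = r ^ p := by
      rw [mul_self_rpow hr]; ring_nf
    simp only [mul_zero, zero_mul, add_zero, zero_add, zero_mul]
    rw [hrr]
    calc (2:ℝ) ^ (2-p) * r ^ p ≤ 1 * r ^ p := by
          apply mul_le_mul_of_nonneg_right hc (Real.rpow_nonneg hr p)
      _ = r ^ p := one_mul _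
  · -- A > 0
    set X := A*A + 2*t + r*r with hX
    have hApow : (A*A) ^ (p/2) = A ^ p := by rw [mul_self_rpow h0.le]; ring_nf
    have hApow2 : (A*A) ^ (p/2 - 1) = A ^ (p-2) := by
      rw [mul_self_rpow h0.le]; ring_nf
    rcases le_or_gt r (2*A) with hr2 | hr2
    · -- case r ≤ 2A : tangent at A*A
      have hX0 : 0 ≤ X := by nlinarith [sq_nonneg (A - r)]
      have htan := rpow_tangent hq (mul_nonneg hA hA) hX0
      rw [hApow, hApow2] at htan
      have hXd : X - A*A = 2*t + r*r := by rw [hX]; ring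
      rw [hXd] at htan
      -- remains : 2^(2-p) * r^p ≤ (p/2) * A^(p-2) * (r*r)
      have hrem : (2:ℝ) ^ (2-p) * r ^ p ≤ p/2 * A ^ (p-2) * (r*r) := by
        rcases eq_or_lt_of_le hr with hr0 | hr0
        · rw [← hr0, Real.zero_rpow hp0.ne']
          simp
        · have e1 : r ^ p = r ^ (p-2) * (r*r) := by
            rw [show p = (p-2) + 2 by ring, Real.rpow_add hr0, Real.rpow_two]
            ring_nf
          have e2 : r ^ (p-2) ≤ (2*A) ^ (p-2) :=
            Real.rpow_le_rpow hr hr2 (by linarith)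
          have e3 : (2*A) ^ (p-2) = 2 ^ (p-2) * A ^ (p-2) :=
            Real.mul_rpow (by norm_num) h0.le
          have e4 : (2:ℝ) ^ (2-p) * 2 ^ (p-2) = 1 := by
            rw [← Real.rpow_add (by norm_num : (0:ℝ) < 2)]
            norm_num
          have hA2 : 0 ≤ A ^ (p-2) := Real.rpow_nonneg h0.le _
          have h2p : 0 ≤ (2:ℝ) ^ (2-p) := Real.rpow_nonneg (by norm_num) _
          calc (2:ℝ) ^ (2-p) * r ^ p = 2 ^ (2-p) * r ^ (p-2) * (r*r) := by
                rw [e1]; ring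
            _ ≤ 2 ^ (2-p) * (2 ^ (p-2) * A ^ (p-2)) * (r*r) := by
                apply mul_le_mul_of_nonneg_right _ (mul_nonneg hr0.le hr0.le)
                rw [e3] at e2
                exact mul_le_mul_of_nonneg_left e2 h2p
            _ = 2 ^ (2-p) * 2 ^ (p-2) * A ^ (p-2) * (r*r) := by ring
            _ = 1 * A ^ (p-2) * (r*r) := by rw [e4]
            _ ≤ p/2 * A ^ (p-2) * (r*r) := by
                apply mul_le_mul_of_nonneg_right _ (mul_nonneg hr0.le hr0.le)
                apply mul_le_mul_of_nonneg_right _ hA2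
                linarith
      nlinarith [htan, hrem]
    · -- case 2A < r : tangent at (r-A)^2
      have hrA : 0 < r - A := by linarith
      have hy0 : 0 ≤ (r-A)*(r-A) := mul_nonneg hrA.le hrA.le
      have hX0 : 0 ≤ X := by nlinarith
      have htan := rpow_tangent hq hy0 hX0
      have hy1 : ((r-A)*(r-A)) ^ (p/2) = (r-A) ^ p := by rw [mul_self_rpow hrA.le]; ring_nf
      have hy2 : ((r-A)*(r-A)) ^ (p/2 - 1) = (r-A) ^ (p-2) := by
        rw [mul_self_rpow hrA.le]; ring_nf
      rw [hy1, hy2] at htan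
      have hXd : X - (r-A)*(r-A) = 2*(t + A*r) := by rw [hX]; ring
      rw [hXd] at htan
      -- (r-A)^(p-2) ≥ A^(p-2), t + A*r ≥ 0
      have hge : A ^ (p-2) ≤ (r-A) ^ (p-2) :=
        Real.rpow_le_rpow h0.le (by linarith) (by linarith)
      have htAr : 0 ≤ t + A*r := by linarith
      have hmid : p * A ^ (p-2) * (t + A*r) ≤ p/2 * (r-A) ^ (p-2) * (2*(t + A*r)) := by
        have := mul_le_mul_of_nonneg_right hge htAr
        nlinarith
      have hstep := step3 hp h0 hr2.le
      have hA1 : A ^ (p-2) * A = A ^ (p-1) := by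
        rw [← Real.rpow_add_one h0.ne' (p-2)]; ring_nf
      have expand : p * A ^ (p-2) * (t + A*r) = p * A ^ (p-2) * t + p * A ^ (p-1) * r := by
        rw [← hA1]; ring
      calc A ^ p + p * A ^ (p-2) * t + (2:ℝ) ^ (2-p) * r ^ p
          ≤ (r-A) ^ p + p * A ^ (p-1) * r + p * A ^ (p-2) * t := by linarith
        _ = (r-A) ^ p + p * A ^ (p-2) * (t + A*r) := by rw [expand]; ring
        _ ≤ (r-A) ^ p + p/2 * (r-A) ^ (p-2) * (2*(t + A*r)) := by linarith
        _ ≤ X ^ (p/2) := htan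

lemma key_complex {p : ℝ} (hp : 2 ≤ p) (a b : ℂ) :
    ‖a‖ ^ p + p * ‖a‖ ^ (p-2) * ((starRingEnd ℂ) a * b).re + (2:ℝ) ^ (2-p) * ‖b‖ ^ p
      ≤ ‖a + b‖ ^ p := by
  set t := ((starRingEnd ℂ) a * b).re with hts
  have ht : |t| ≤ ‖a‖ * ‖b‖ := by
    calc |t| ≤ ‖(starRingEnd ℂ) a * b‖ := Complex.abs_re_le_norm _
      _ = ‖a‖ * ‖b‖ := by rw [norm_mul, RCLike.norm_conj]
  have hid : ‖a + b‖ * ‖a + b‖ = ‖a‖ * ‖a‖ + 2 * t + ‖b‖ * ‖b‖ := by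
    have h1 : Complex.normSq (a + b)
        = Complex.normSq a + Complex.normSq b + 2 * (a * (starRingEnd ℂ) b).re :=
      Complex.normSq_add a b
    have h2 : (a * (starRingEnd ℂ) b).re = t := by
      rw [hts, ← Complex.conj_re (a * (starRingEnd ℂ) b)]
      simp [mul_comm]
    simp only [Complex.normSq_eq_norm_sq, sq] at h1
    rw [h2] at h1
    linarith
  have hfin : ‖a + b‖ ^ p = (‖a + b‖ * ‖a + b‖) ^ (p/2) := by
    rw [mul_self_rpow (norm_nonneg _)]; ring_nf
  rw [hfin, hid]
  exact key_real hp (norm_nonneg a) (norm_nonneg b) (neg_le_of_abs_le ht) (le_of_abs_le ht)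

lemma key_sum {p : ℝ} (hp : 2 ≤ p) {n : ℕ} (μ : Fin n → ℝ) (hμ : ∀ i, 0 ≤ μ i)
    (hsum : ∑ i, μ i = 1) (z : Fin n → ℂ) :
    ‖∑ j, μ j • z j‖ ^ p + (2:ℝ) ^ (2-p) * ∑ i, μ i * ‖z i - ∑ j, μ j • z j‖ ^ p
      ≤ ∑ i, μ i * ‖z i‖ ^ p := by
  set m := ∑ j, μ j • z j with hm
  have hkey : ∀ i, μ i * (‖m‖ ^ p + p * ‖m‖ ^ (p-2) * ((starRingEnd ℂ) m * (z i - m)).re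
      + (2:ℝ) ^ (2-p) * ‖z i - m‖ ^ p) ≤ μ i * ‖z i‖ ^ p := by
    intro i
    apply mul_le_mul_of_nonneg_left _ (hμ i)
    have := key_complex hp m (z i - m)
    simpa using this
  have hsum_le := Finset.sum_le_sum (s := Finset.univ) (fun i (_ : i ∈ Finset.univ) => hkey i)
  have hzero : ∑ i, μ i * ((starRingEnd ℂ) m * (z i - m)).re = 0 := by
    have h1 : ∑ i, μ i • (z i - m) = 0 := by
      simp only [smul_sub]
      rw [Finset.sum_sub_distrib, ← hm, ← Finset.sum_smul, hsum, one_smul, sub_self]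
    have h2 : ∑ i, μ i * ((starRingEnd ℂ) m * (z i - m)).re
        = ((starRingEnd ℂ) m * ∑ i, μ i • (z i - m)).re := by
      rw [Finset.mul_sum, Complex.re_sum]
      apply Finset.sum_congr rfl
      intro i _
      rw [mul_smul_comm, Complex.smul_re, smul_eq_mul]
    rw [h2, h1, mul_zero, Complex.zero_re]
  have hexp : ∑ i, μ i * (‖m‖ ^ p + p * ‖m‖ ^ (p-2) * ((starRingEnd ℂ) m * (z i - m)).re
      + (2:ℝ) ^ (2-p) * ‖z i - m‖ ^ p)
      = ‖m‖ ^ p + p * ‖m‖ ^ (p-2) * (∑ i, μ i * ((starRingEnd ℂ) m * (z i - m)).re)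
        + (2:ℝ) ^ (2-p) * ∑ i, μ i * ‖z i - m‖ ^ p := by
    rw [Finset.sum_congr rfl (fun i _ => by ring :
      ∀ i ∈ Finset.univ, μ i * (‖m‖ ^ p + p * ‖m‖ ^ (p-2) * ((starRingEnd ℂ) m * (z i - m)).re
        + (2:ℝ) ^ (2-p) * ‖z i - m‖ ^ p)
      = ‖m‖ ^ p * μ i + p * ‖m‖ ^ (p-2) * (μ i * ((starRingEnd ℂ) m * (z i - m)).re)
        + (2:ℝ) ^ (2-p) * (μ i * ‖z i - m‖ ^ p))]
    rw [Finset.sum_add_distrib, Finset.sum_add_distrib, ← Finset.mul_sum, ← Finset.mul_sum,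
      ← Finset.mul_sum, hsum]
    ring
  rw [hexp, hzero] at hsum_le
  simpa using hsum_le

/-- for `p ∈ [2,∞)`, a finite probability space `(Ω,μ)` (modelled as `Fin n` with
weights), a measure space `(Ω',μ')` and `U : Ω → L^p(Ω',μ';ℂ)`,
`‖𝔼U‖^p + 2^{2−p}·𝔼[‖U − 𝔼U‖^p] ≤ 𝔼[‖U‖^p]`. -/
theorem stmt5 (p : ℝ) (hp : 2 ≤ p)
    {Ω' : Type*} [MeasurableSpace Ω'] (μ' : Measure Ω')
    [Fact (1 ≤ ENNReal.ofReal p)]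
    (n : ℕ) (μ : Fin n → ℝ) (hμ : ∀ i, 0 ≤ μ i) (hsum : ∑ i, μ i = 1)
    (U : Fin n → Lp ℂ (ENNReal.ofReal p) μ') :
    ‖∑ i, μ i • U i‖ ^ p + (2 : ℝ) ^ (2 - p) * ∑ i, μ i * ‖U i - ∑ j, μ j • U j‖ ^ p
      ≤ ∑ i, μ i * ‖U i‖ ^ p := by
  classical
  have hp0 : (0:ℝ) < p := by linarith
  have hq0 : ENNReal.ofReal p ≠ 0 := by
    simp only [ne_eq, ENNReal.ofReal_eq_zero, not_le]; linarith
  have hqt : ENNReal.ofReal p ≠ ⊤ := ENNReal.ofReal_ne_top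
  have hqr : (ENNReal.ofReal p).toReal = p := ENNReal.toReal_ofReal hp0.le
  -- norm to integral
  have hnorm : ∀ f : Lp ℂ (ENNReal.ofReal p) μ', ‖f‖ ^ p = ∫ a, ‖f a‖ ^ p ∂μ' := by
    intro f
    have h := (Lp.memLp f).eLpNorm_eq_integral_rpow_norm hq0 hqt
    rw [hqr] at h
    have hnn : 0 ≤ ∫ a, ‖f a‖ ^ p ∂μ' :=
      integral_nonneg (fun a => Real.rpow_nonneg (norm_nonneg _) _)
    rw [Lp.norm_def, h, ENNReal.toReal_ofReal (Real.rpow_nonneg hnn _),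
      Real.rpow_inv_rpow hnn hp0.ne']
  -- integrability
  have hint : ∀ f : Lp ℂ (ENNReal.ofReal p) μ', Integrable (fun a => ‖f a‖ ^ p) μ' := by
    intro f
    have h := (Lp.memLp f).integrable_norm_rpow hq0 hqt
    rwa [hqr] at h
  set S : Lp ℂ (ENNReal.ofReal p) μ' := ∑ j, μ j • U j with hSdef
  -- a.e. identification of S
  have hcoe : ∀ s : Finset (Fin n),
      (⇑(∑ j ∈ s, μ j • U j) : Ω' → ℂ) =ᵐ[μ'] fun a => ∑ j ∈ s, μ j • (U j a) := by
    intro s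
    induction s using Finset.induction_on with
    | empty =>
        simp only [Finset.sum_empty]
        filter_upwards [Lp.coeFn_zero (E := ℂ) (p := ENNReal.ofReal p) (μ := μ')] with a ha
        simpa using ha
    | @insert j s hj ih =>
        rw [Finset.sum_insert hj]
        filter_upwards [Lp.coeFn_add (μ j • U j) (∑ i ∈ s, μ i • U i),
          Lp.coeFn_smul (μ j) (U j), ih] with a h1 h2 h3
        rw [Finset.sum_insert hj]
        simp only [Pi.add_apply] at h1
        rw [h1, h3, h2, Pi.smul_apply]
  have hSa : (⇑S : Ω' → ℂ) =ᵐ[μ'] fun a => ∑ j, μ j • (U j a) := hcoe Finset.univ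
  -- a.e. pointwise inequality
  have hae : (fun a => ‖S a‖ ^ p + (2:ℝ) ^ (2-p) * ∑ i, μ i * ‖(U i - S) a‖ ^ p)
      ≤ᵐ[μ'] fun a => ∑ i, μ i * ‖U i a‖ ^ p := by
    have hsubs : ∀ᵐ a ∂μ', ∀ i, (U i - S) a = U i a - S a :=
      ae_all_iff.2 fun i => Lp.coeFn_sub (U i) S
    filter_upwards [hSa, hsubs] with a h1 h2
    have e : ∀ i ∈ Finset.univ, μ i * ‖(U i - S) a‖ ^ p
        = μ i * ‖U i a - ∑ j, μ j • (U j a)‖ ^ p := by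
      intro i _
      rw [h2 i, h1]
    rw [h1, Finset.sum_congr rfl e]
    exact key_sum hp μ hμ hsum fun i => U i a
  -- rewrite all norms as integrals
  rw [hnorm]
  have e2 : ∀ i ∈ Finset.univ, μ i * ‖U i - S‖ ^ p
      = μ i * ∫ a, ‖(U i - S) a‖ ^ p ∂μ' := fun i _ => by rw [hnorm]
  have e3 : ∀ i ∈ Finset.univ, μ i * ‖U i‖ ^ p
      = μ i * ∫ a, ‖U i a‖ ^ p ∂μ' := fun i _ => by rw [hnorm]
  rw [Finset.sum_congr rfl e2, Finset.sum_congr rfl e3]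
  -- swap sums and integrals
  have hswap : ∀ g : Fin n → Ω' → ℝ, (∀ i, Integrable (g i) μ') →
      ∑ i, μ i * ∫ a, g i a ∂μ' = ∫ a, ∑ i, μ i * g i a ∂μ' := by
    intro g hg
    calc ∑ i, μ i * ∫ a, g i a ∂μ' = ∑ i, ∫ a, μ i * g i a ∂μ' :=
          Finset.sum_congr rfl fun i _ => (integral_const_mul (μ i) (g i)).symm
      _ = ∫ a, ∑ i, μ i * g i a ∂μ' :=
          (integral_finset_sum _ fun i _ => (hg i).const_mul (μ i)).symm
  rw [hswap _ fun i => hint (U i - S), hswap _ fun i => hint (U i)]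
  have hG : Integrable (fun a => ∑ i, μ i * ‖(U i - S) a‖ ^ p) μ' :=
    integrable_finset_sum _ fun i _ => (hint (U i - S)).const_mul (μ i)
  rw [← integral_const_mul ((2:ℝ) ^ (2-p)), ← integral_add (hint S) (hG.const_mul _)]
  exact integral_mono_ae ((hint S).add (hG.const_mul _))
    (integrable_finset_sum _ fun i _ => (hint (U i)).const_mul (μ i)) hae
end
end

section
/- For every 1 ≤ p, q < ∞ there exists a constant C_{p,q} > 0 such that for every measure space (Ω, μ), every complex Banach space X, and every two strongly measurable functions f₁, f₂ in the unit ball of the Bochner space L^p(Ω, μ; X), one has ‖M_{p,q}(f₁) − M_{p,q}(f₂)‖_{L^q(Ω,μ;X)} ≤ C_{p,q} · ‖f₁ − f₂‖_{L^p(Ω,μ;X)}^{min(p/q, 1)}. -/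
open scoped BigOperators ENNReal
open MeasureTheory

noncomputable section

/-- The map `x ↦ {x}^α = ‖x‖^{α−1} x` (with `{0}^α = 0`). -/
def mazurPow {X : Type*} [NormedAddCommGroup X] [Module ℝ X] (α : ℝ) (x : X) : X :=
  ‖x‖ ^ (α - 1) • x

namespace MazurAux

lemma mazur_decomp {X : Type*} [NormedAddCommGroup X] [Module ℝ X] (α : ℝ) (x y : X) :
    mazurPow α x - mazurPow α y
      = ‖x‖ ^ (α - 1) • (x - y) + (‖x‖ ^ (α - 1) - ‖y‖ ^ (α - 1)) • y := by
  simp only [mazurPow]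
  module

lemma pow_mul_le {a w α : ℝ} (ha : 0 < a) (hw : 0 ≤ w) (hwa : w ≤ a) (hα : 0 < α)
    (hα1 : α ≤ 1) : a ^ (α - 1) * w ≤ w ^ α := by
  rcases hw.eq_or_lt with rfl | hw'
  · simp [Real.rpow_nonneg]
  calc a ^ (α - 1) * w = a ^ (α - 1) * (w ^ (1 - α) * w ^ α) := by
        rw [← Real.rpow_add hw', sub_add_cancel, Real.rpow_one]
    _ ≤ a ^ (α - 1) * (a ^ (1 - α) * w ^ α) := by
        have h := Real.rpow_le_rpow hw hwa (by linarith : (0:ℝ) ≤ 1 - α)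
        have h1 : (0:ℝ) ≤ a ^ (α - 1) := Real.rpow_nonneg ha.le _
        have h2 : (0:ℝ) ≤ w ^ α := Real.rpow_nonneg hw _
        exact mul_le_mul_of_nonneg_left (mul_le_mul_of_nonneg_right h h2) h1
    _ = w ^ α := by
        rw [← mul_assoc, ← Real.rpow_add ha]
        have : α - 1 + (1 - α) = 0 := by ring
        rw [this, Real.rpow_zero, one_mul]

lemma holder_aux {X : Type*} [NormedAddCommGroup X] [NormedSpace ℝ X] {α : ℝ}
    (hα : 0 < α) (hα1 : α ≤ 1) (x y : X) (hxy : ‖y‖ ≤ ‖x‖) :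
    ‖mazurPow α x - mazurPow α y‖ ≤ 3 * ‖x - y‖ ^ α := by
  by_cases hx : x = 0
  · have hy : y = 0 := by
      have : ‖y‖ ≤ 0 := by simpa [hx] using hxy
      simpa using le_antisymm this (norm_nonneg _)
    subst hx; subst hy
    simp [mazurPow]
    positivity
  have ha : 0 < ‖x‖ := norm_pos_iff.mpr hx
  have hb : 0 ≤ ‖y‖ := norm_nonneg y
  have hw : 0 ≤ ‖x - y‖ := norm_nonneg _
  have hdw : ‖x‖ - ‖y‖ ≤ ‖x - y‖ := by
    have := abs_norm_sub_norm_le x y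
    exact (le_abs_self _).trans this
  -- term 1
  have T1 : ‖x‖ ^ (α - 1) * ‖x - y‖ ≤ 2 * ‖x - y‖ ^ α := by
    have hw2 : ‖x - y‖ ≤ 2 * ‖x‖ := by
      have := norm_sub_le x y
      linarith
    have key : (2 * ‖x‖) ^ (α - 1) * ‖x - y‖ ≤ ‖x - y‖ ^ α :=
      pow_mul_le (by linarith) hw hw2 hα hα1
    have hfac : ‖x‖ ^ (α - 1) ≤ 2 * (2 * ‖x‖) ^ (α - 1) := by
      rw [Real.mul_rpow (by norm_num) ha.le]
      have h2 : (1:ℝ) ≤ 2 * 2 ^ (α - 1) := by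
        have : (2:ℝ) ^ (0:ℝ) ≤ 2 ^ α := Real.rpow_le_rpow_of_exponent_le one_le_two hα.le
        rw [Real.rpow_zero] at this
        have e : (2:ℝ) ^ (1:ℝ) * 2 ^ (α - 1) = 2 ^ α := by
          rw [← Real.rpow_add (by norm_num : (0:ℝ) < 2)]
          ring_nf
        rw [Real.rpow_one] at e
        linarith
      nlinarith [Real.rpow_nonneg ha.le (α - 1), Real.rpow_nonneg (by norm_num : (0:ℝ) ≤ 2) (α - 1)]
    calc ‖x‖ ^ (α - 1) * ‖x - y‖ ≤ 2 * (2 * ‖x‖) ^ (α - 1) * ‖x - y‖ := by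
          exact mul_le_mul_of_nonneg_right hfac hw
      _ = 2 * ((2 * ‖x‖) ^ (α - 1) * ‖x - y‖) := by ring
      _ ≤ 2 * ‖x - y‖ ^ α := by linarith [key]
  -- term 2
  have T2 : |‖x‖ ^ (α - 1) - ‖y‖ ^ (α - 1)| * ‖y‖ ≤ ‖x - y‖ ^ α := by
    rcases hb.eq_or_lt with hb0 | hb0
    · rw [← hb0, mul_zero]
      positivity
    have horder : ‖x‖ ^ (α - 1) ≤ ‖y‖ ^ (α - 1) :=
      Real.rpow_le_rpow_of_nonpos hb0 hxy (by linarith)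
    rw [abs_sub_comm, abs_of_nonneg (sub_nonneg.mpr horder)]
    have e1 : ‖y‖ ^ (α - 1) * ‖y‖ = ‖y‖ ^ α := by
      rw [← Real.rpow_add_one hb0.ne' (α - 1), sub_add_cancel]
    have e2 : ‖x‖ ^ (α - 1) * ‖x‖ = ‖x‖ ^ α := by
      rw [← Real.rpow_add_one ha.ne' (α - 1), sub_add_cancel]
    have hba : ‖y‖ ^ α ≤ ‖x‖ ^ α := Real.rpow_le_rpow hb hxy hα.le
    have step1 : (‖y‖ ^ (α - 1) - ‖x‖ ^ (α - 1)) * ‖y‖ ≤ ‖x‖ ^ (α - 1) * (‖x‖ - ‖y‖) := by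
      have := e1; have := e2; nlinarith
    have step2 : ‖x‖ ^ (α - 1) * (‖x‖ - ‖y‖) ≤ (‖x‖ - ‖y‖) ^ α :=
      pow_mul_le ha (by linarith) (by linarith) hα hα1
    have step3 : (‖x‖ - ‖y‖) ^ α ≤ ‖x - y‖ ^ α :=
      Real.rpow_le_rpow (by linarith) hdw hα.le
    linarith
  calc ‖mazurPow α x - mazurPow α y‖
      ≤ ‖(‖x‖ ^ (α - 1)) • (x - y)‖ + ‖(‖x‖ ^ (α - 1) - ‖y‖ ^ (α - 1)) • y‖ := by
        rw [mazur_decomp]; exact norm_add_le _ _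
    _ = ‖x‖ ^ (α - 1) * ‖x - y‖ + |‖x‖ ^ (α - 1) - ‖y‖ ^ (α - 1)| * ‖y‖ := by
        rw [norm_smul, norm_smul, Real.norm_eq_abs, Real.norm_eq_abs,
          abs_of_nonneg (Real.rpow_nonneg ha.le _)]
    _ ≤ 2 * ‖x - y‖ ^ α + ‖x - y‖ ^ α := add_le_add T1 T2
    _ = 3 * ‖x - y‖ ^ α := by ring

lemma holder_bound {X : Type*} [NormedAddCommGroup X] [NormedSpace ℝ X] {α : ℝ}
    (hα : 0 < α) (hα1 : α ≤ 1) (x y : X) :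
    ‖mazurPow α x - mazurPow α y‖ ≤ 3 * ‖x - y‖ ^ α := by
  rcases le_total ‖y‖ ‖x‖ with h | h
  · exact holder_aux hα hα1 x y h
  · rw [norm_sub_rev, show ‖x - y‖ = ‖y - x‖ from norm_sub_rev x y]
    exact holder_aux hα hα1 y x h

lemma one_sub_rpow_le {t β : ℝ} (ht0 : 0 ≤ t) (ht1 : t ≤ 1) (hβ : 0 ≤ β) :
    1 - t ^ β ≤ (1 + β) * (1 - t) := by
  rcases le_total β 1 with hβ1 | hβ1
  · rcases ht0.eq_or_lt with rfl | ht0'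
    · rcases hβ.eq_or_lt with rfl | hβ'
      · simp
      · rw [Real.zero_rpow hβ'.ne']
        nlinarith
    · have : t ^ (1:ℝ) ≤ t ^ β := Real.rpow_le_rpow_of_exponent_ge ht0' ht1 hβ1
      rw [Real.rpow_one] at this
      nlinarith
  · have hber : 1 + β * (t - 1) ≤ (1 + (t - 1)) ^ β :=
      one_add_mul_self_le_rpow_one_add (by linarith) hβ1
    have e : 1 + (t - 1) = t := by ring
    rw [e] at hber
    nlinarith

lemma key_B {a b β : ℝ} (hb : 0 ≤ b) (hba : b ≤ a) (ha : 0 < a) (hβ : 0 ≤ β) :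
    (a ^ β - b ^ β) * b ≤ (1 + β) * a ^ β * (a - b) := by
  have ht0 : 0 ≤ b / a := div_nonneg hb ha.le
  have ht1 : b / a ≤ 1 := (div_le_one ha).mpr hba
  have h1 := one_sub_rpow_le ht0 ht1 hβ
  have h2 : (b / a) ^ β = b ^ β / a ^ β := Real.div_rpow hb ha.le β
  have hapow : 0 < a ^ β := Real.rpow_pos_of_pos ha β
  have hbpow : 0 ≤ b ^ β := Real.rpow_nonneg hb β
  rw [h2] at h1
  have h1' : a ^ β - b ^ β ≤ (1 + β) * a ^ β * (1 - b / a) := by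
    have := mul_le_mul_of_nonneg_left h1 hapow.le
    have e : a ^ β * (b ^ β / a ^ β) = b ^ β := by field_simp
    nlinarith [this, e]
  have hfrac : (1 + β) * a ^ β * (1 - b / a) * b ≤ (1 + β) * a ^ β * (a - b) := by
    have e : (1 - b / a) * b = (a - b) * (b / a) := by field_simp
    have hle : (a - b) * (b / a) ≤ (a - b) * 1 :=
      mul_le_mul_of_nonneg_left ht1 (by linarith)
    have hc : 0 ≤ (1 + β) * a ^ β := by positivity
    calc (1 + β) * a ^ β * (1 - b / a) * b = (1 + β) * a ^ β * ((a - b) * (b / a)) := by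
          rw [mul_assoc]; rw [e]
      _ ≤ (1 + β) * a ^ β * ((a - b) * 1) := mul_le_mul_of_nonneg_left hle hc
      _ = (1 + β) * a ^ β * (a - b) := by ring
  calc (a ^ β - b ^ β) * b ≤ (1 + β) * a ^ β * (1 - b / a) * b := by
        apply mul_le_mul_of_nonneg_right h1' hb
    _ ≤ (1 + β) * a ^ β * (a - b) := hfrac

lemma lip_aux {X : Type*} [NormedAddCommGroup X] [NormedSpace ℝ X] {α : ℝ}
    (hα : 1 ≤ α) (x y : X) (hxy : ‖y‖ ≤ ‖x‖) :
    ‖mazurPow α x - mazurPow α y‖ ≤ (1 + α) * ‖x‖ ^ (α - 1) * ‖x - y‖ := by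
  by_cases hx : x = 0
  · have hy : y = 0 := by
      have : ‖y‖ ≤ 0 := by simpa [hx] using hxy
      simpa using le_antisymm this (norm_nonneg _)
    subst hx; subst hy
    simp [mazurPow]
  have ha : 0 < ‖x‖ := norm_pos_iff.mpr hx
  have hb : 0 ≤ ‖y‖ := norm_nonneg y
  have hw : 0 ≤ ‖x - y‖ := norm_nonneg _
  have hdw : ‖x‖ - ‖y‖ ≤ ‖x - y‖ := by
    have := abs_norm_sub_norm_le x y
    exact (le_abs_self _).trans this
  have horder : ‖y‖ ^ (α - 1) ≤ ‖x‖ ^ (α - 1) := Real.rpow_le_rpow hb hxy (by linarith)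
  have T2 : |‖x‖ ^ (α - 1) - ‖y‖ ^ (α - 1)| * ‖y‖ ≤ α * ‖x‖ ^ (α - 1) * ‖x - y‖ := by
    rw [abs_of_nonneg (sub_nonneg.mpr horder)]
    have hkb := key_B hb hxy ha (by linarith : (0:ℝ) ≤ α - 1)
    have e : 1 + (α - 1) = α := by ring
    rw [e] at hkb
    have h2 : α * ‖x‖ ^ (α - 1) * (‖x‖ - ‖y‖) ≤ α * ‖x‖ ^ (α - 1) * ‖x - y‖ := by
      apply mul_le_mul_of_nonneg_left hdw
      positivity
    linarith
  calc ‖mazurPow α x - mazurPow α y‖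
      ≤ ‖(‖x‖ ^ (α - 1)) • (x - y)‖ + ‖(‖x‖ ^ (α - 1) - ‖y‖ ^ (α - 1)) • y‖ := by
        rw [mazur_decomp]; exact norm_add_le _ _
    _ = ‖x‖ ^ (α - 1) * ‖x - y‖ + |‖x‖ ^ (α - 1) - ‖y‖ ^ (α - 1)| * ‖y‖ := by
        rw [norm_smul, norm_smul, Real.norm_eq_abs, Real.norm_eq_abs,
          abs_of_nonneg (Real.rpow_nonneg ha.le _)]
    _ ≤ ‖x‖ ^ (α - 1) * ‖x - y‖ + α * ‖x‖ ^ (α - 1) * ‖x - y‖ := by linarith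
    _ = (1 + α) * ‖x‖ ^ (α - 1) * ‖x - y‖ := by ring

lemma lip_bound {X : Type*} [NormedAddCommGroup X] [NormedSpace ℝ X] {α : ℝ}
    (hα : 1 ≤ α) (x y : X) :
    ‖mazurPow α x - mazurPow α y‖
      ≤ (1 + α) * (‖x‖ ^ (α - 1) + ‖y‖ ^ (α - 1)) * ‖x - y‖ := by
  have hsum : ∀ z w : X, ‖z‖ ^ (α - 1) ≤ ‖z‖ ^ (α - 1) + ‖w‖ ^ (α - 1) := by
    intro z w
    nlinarith [Real.rpow_nonneg (norm_nonneg w) (α - 1)]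
  rcases le_total ‖y‖ ‖x‖ with h | h
  · refine (lip_aux hα x y h).trans ?_
    apply mul_le_mul_of_nonneg_right _ (norm_nonneg _)
    exact mul_le_mul_of_nonneg_left (hsum x y) (by linarith)
  · rw [norm_sub_rev, show ‖x - y‖ = ‖y - x‖ from norm_sub_rev x y]
    refine (lip_aux hα y x h).trans ?_
    apply mul_le_mul_of_nonneg_right _ (norm_nonneg _)
    refine mul_le_mul_of_nonneg_left ?_ (by linarith)
    have h0 : 0 ≤ ‖x‖ ^ (α - 1) := Real.rpow_nonneg (norm_nonneg _) _
    linarith [hsum y x]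

end MazurAux

theorem stmt7 (p q : ℝ) (hp : 1 ≤ p) (hq : 1 ≤ q) :
    ∃ C : ℝ, 0 < C ∧
      ∀ (Ω : Type) [MeasurableSpace Ω] (μ : Measure Ω)
        (X : Type) [NormedAddCommGroup X] [NormedSpace ℂ X] [CompleteSpace X]
        (f₁ f₂ : Ω → X),
        StronglyMeasurable f₁ → StronglyMeasurable f₂ →
        eLpNorm f₁ (ENNReal.ofReal p) μ ≤ 1 → eLpNorm f₂ (ENNReal.ofReal p) μ ≤ 1 →
        eLpNorm (fun x => mazurPow (p / q) (f₁ x) - mazurPow (p / q) (f₂ x))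
            (ENNReal.ofReal q) μ
          ≤ ENNReal.ofReal C *
              (eLpNorm (fun x => f₁ x - f₂ x) (ENNReal.ofReal p) μ) ^ min (p / q) 1 := by
  have hp0 : 0 < p := lt_of_lt_of_le one_pos hp
  have hq0 : 0 < q := lt_of_lt_of_le one_pos hq
  refine ⟨5 + 2 * p, by linarith, ?_⟩
  intro Ω _ μ X _ _ _ f₁ f₂ hf₁ hf₂ hb₁ hb₂
  set α : ℝ := p / q with hα_def
  have hαpos : 0 < α := div_pos hp0 hq0
  have hαp : α ≤ p := div_le_self hp0.le hq
  rcases le_total p q with hpq | hqp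
  · -- case p ≤ q : α ≤ 1, exponent is α
    have hα1 : α ≤ 1 := (div_le_one hq0).mpr hpq
    have hmin : min α 1 = α := min_eq_left hα1
    rw [hmin]
    have hmono : eLpNorm (fun x => mazurPow α (f₁ x) - mazurPow α (f₂ x)) (ENNReal.ofReal q) μ
        ≤ eLpNorm (fun x => (3:ℝ) * ‖f₁ x - f₂ x‖ ^ α) (ENNReal.ofReal q) μ := by
      apply eLpNorm_mono_real
      intro x
      exact MazurAux.holder_bound hαpos hα1 (f₁ x) (f₂ x)
    have heq : eLpNorm (fun x => (3:ℝ) * ‖f₁ x - f₂ x‖ ^ α) (ENNReal.ofReal q) μ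
        = (‖(3:ℝ)‖₊ : ℝ≥0∞) *
            (eLpNorm (fun x => f₁ x - f₂ x) (ENNReal.ofReal p) μ) ^ α := by
      have e1 : (fun x => (3:ℝ) * ‖f₁ x - f₂ x‖ ^ α)
          = (3:ℝ) • (fun x => ‖(fun y => f₁ y - f₂ y) x‖ ^ α) := rfl
      rw [e1, eLpNorm_const_smul, eLpNorm_norm_rpow _ hαpos,
        ← ENNReal.ofReal_mul hq0.le]
      congr 2
      rw [hα_def]
      field_simp
    refine hmono.trans (heq.le.trans ?_)
    apply mul_le_mul_left
    have : (‖(3:ℝ)‖₊ : ℝ≥0∞) = ENNReal.ofReal 3 := by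
      simp [Real.enorm_eq_ofReal (by norm_num : (0:ℝ) ≤ 3)]
    rw [this]
    exact ENNReal.ofReal_le_ofReal (by linarith)
  · -- case q ≤ p : α ≥ 1, exponent is 1
    have hα1 : 1 ≤ α := (one_le_div hq0).mpr hqp
    have hmin : min α 1 = 1 := min_eq_right hα1
    rw [hmin, ENNReal.rpow_one]
    rcases eq_or_lt_of_le hqp with heq | hlt
    · -- p = q
      have hα_one : α = 1 := by rw [hα_def, ← heq, div_self hq0.ne']
      have hid : ∀ z : X, mazurPow α z = z := by
        intro z
        simp [mazurPow, hα_one]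
      simp_rw [hid]
      rw [← heq] at *
      refine le_mul_of_one_le_left zero_le ?_
      rw [ENNReal.one_le_ofReal]
      linarith
    · -- q < p
      set β : ℝ := α - 1 with hβ_def
      have hαgt : 1 < α := (one_lt_div hq0).mpr hlt
      have hβpos : 0 < β := by simp only [hβ_def]; linarith
      set r : ℝ := p * q / (p - q) with hr_def
      have hpq' : 0 < p - q := by linarith
      have hrpos : 0 < r := by positivity
      have hr1 : 1 ≤ r := by
        rw [hr_def, le_div_iff₀ hpq']
        nlinarith
      have hrβ : r * β = p := by
        rw [hr_def, hβ_def, hα_def]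
        field_simp
        try ring
      -- measurability
      have hg : AEStronglyMeasurable (fun x => f₁ x - f₂ x) μ :=
        (hf₁.sub hf₂).aestronglyMeasurable
      have h₁m : StronglyMeasurable (fun x => ‖f₁ x‖ ^ β) :=
        (Real.continuous_rpow_const hβpos.le).comp_stronglyMeasurable hf₁.norm
      have h₂m : StronglyMeasurable (fun x => ‖f₂ x‖ ^ β) :=
        (Real.continuous_rpow_const hβpos.le).comp_stronglyMeasurable hf₂.norm
      set F : Ω → ℝ := fun x => (1 + α) * (‖f₁ x‖ ^ β + ‖f₂ x‖ ^ β) with hF_def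
      have hFm : AEStronglyMeasurable F μ :=
        ((h₁m.add h₂m).const_mul (1 + α)).aestronglyMeasurable
      have hF_nonneg : ∀ x, 0 ≤ F x := by
        intro x
        have := Real.rpow_nonneg (norm_nonneg (f₁ x)) β
        have := Real.rpow_nonneg (norm_nonneg (f₂ x)) β
        positivity
      -- pointwise bound
      have hmono : eLpNorm (fun x => mazurPow α (f₁ x) - mazurPow α (f₂ x)) (ENNReal.ofReal q) μ
          ≤ eLpNorm (F • fun x => f₁ x - f₂ x) (ENNReal.ofReal q) μ := by
        apply eLpNorm_mono
        intro x
        have hpt := MazurAux.lip_bound hα1 (f₁ x) (f₂ x)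
        have : ‖(F • fun y => f₁ y - f₂ y) x‖ = F x * ‖f₁ x - f₂ x‖ := by
          simp only [Pi.smul_apply', smul_eq_mul, norm_mul, Real.norm_eq_abs,
            abs_of_nonneg (hF_nonneg x)]
          rw [norm_smul, Real.norm_eq_abs, abs_of_nonneg (hF_nonneg x)]
        rw [this]
        simpa [hF_def, hβ_def, mul_assoc] using hpt
      -- Hölder
      have hconj : 1 / ENNReal.ofReal q = 1 / ENNReal.ofReal r + 1 / ENNReal.ofReal p := by
        rw [one_div, one_div, one_div, ← ENNReal.ofReal_inv_of_pos hq0,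
          ← ENNReal.ofReal_inv_of_pos hrpos, ← ENNReal.ofReal_inv_of_pos hp0,
          ← ENNReal.ofReal_add (by positivity) (by positivity)]
        congr 1
        rw [hr_def]
        field_simp
        try ring
      have hhold := eLpNorm_smul_le_mul_eLpNorm (p := ENNReal.ofReal r) (q := ENNReal.ofReal p)
        (r := ENNReal.ofReal q) hg hFm (hpqr := ⟨by simpa only [one_div] using hconj.symm⟩)
      -- bound eLpNorm F r
      have hF_split : eLpNorm F (ENNReal.ofReal r) μ
          ≤ ENNReal.ofReal (1 + α) *
            (eLpNorm (fun x => ‖f₁ x‖ ^ β) (ENNReal.ofReal r) μ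
              + eLpNorm (fun x => ‖f₂ x‖ ^ β) (ENNReal.ofReal r) μ) := by
        have e1 : F = (1 + α) • (fun x => ‖f₁ x‖ ^ β + ‖f₂ x‖ ^ β) := rfl
        rw [e1, eLpNorm_const_smul]
        have : ‖(1 + α : ℝ)‖ₑ = ENNReal.ofReal (1 + α) := by
          exact Real.enorm_eq_ofReal (by linarith : (0:ℝ) ≤ 1 + α)
        rw [this]
        apply mul_le_mul_right
        exact eLpNorm_add_le h₁m.aestronglyMeasurable h₂m.aestronglyMeasurable
          (by rwa [ENNReal.one_le_ofReal])
      have hnorm_pow : ∀ (f : Ω → X), eLpNorm f (ENNReal.ofReal p) μ ≤ 1 →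
          eLpNorm (fun x => ‖f x‖ ^ β) (ENNReal.ofReal r) μ ≤ 1 := by
        intro f hf
        rw [eLpNorm_norm_rpow _ hβpos, ← ENNReal.ofReal_mul hrpos.le, hrβ]
        calc (eLpNorm f (ENNReal.ofReal p) μ) ^ β ≤ (1 : ℝ≥0∞) ^ β :=
              ENNReal.rpow_le_rpow hf hβpos.le
          _ = 1 := ENNReal.one_rpow _
      have hF_le : eLpNorm F (ENNReal.ofReal r) μ ≤ ENNReal.ofReal (1 + α) * 2 := by
        refine hF_split.trans ?_
        apply mul_le_mul_right
        calc eLpNorm (fun x => ‖f₁ x‖ ^ β) (ENNReal.ofReal r) μ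
              + eLpNorm (fun x => ‖f₂ x‖ ^ β) (ENNReal.ofReal r) μ
            ≤ 1 + 1 := add_le_add (hnorm_pow f₁ hb₁) (hnorm_pow f₂ hb₂)
          _ = 2 := by norm_num
      refine hmono.trans (hhold.trans ?_)
      apply mul_le_mul_left
      refine hF_le.trans ?_
      have e2 : ENNReal.ofReal (1 + α) * 2 = ENNReal.ofReal (2 * (1 + α)) := by
        rw [ENNReal.ofReal_mul (by norm_num : (0:ℝ) ≤ 2)]
        rw [mul_comm]
        congr 1
        norm_num
      rw [e2]
      exact ENNReal.ofReal_le_ofReal (by nlinarith)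
end
end

section
/- Let p ∈ [2, ∞) and let 𝒢 = (V, ω) be a connected finite weighted graph with at least two vertices and all degrees positive. Suppose ‖A_𝒢‖_{B(L²_0(V,ν;ℂ))} ≤ ε for some ε ≥ 0 with 2^{1−2/p} ε^{2/p} < 1. Then for every f : V → ℝ, 2 λ · inf_{c∈ℝ} ∑_s ν(s) |f(s) − c|^p ≤ ∑_{s,t} ℙ(s,t) |f(t) − f(s)|^p, where λ = (1 − 2^{1−2/p} ε^{2/p})^p (1/2 + 2^{1−p}). Equivalently, via Bourdon's identity λ_{1,p}(𝒢) = 1/(2 π_{p,𝒢}(ℝ)^p), the smallest positive eigenvalue of the p-Laplacian satisfies λ_{1,p}(𝒢) ≥ (1 − 2^{1−2/p} ε^{2/p})^p (1/2 + 2^{1−p}). -/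
open scoped BigOperators
open Finset MeasureTheory

noncomputable section

variable {V : Type*}

namespace Stmt8Aux

open Finset Set

lemma rpow_superadd {q a b : ℝ} (hq : 1 ≤ q) (ha : 0 ≤ a) (hb : 0 ≤ b) :
    a ^ q + b ^ q ≤ (a + b) ^ q := by
  have := NNReal.add_rpow_le_rpow_add a.toNNReal b.toNNReal hq
  have h2 := NNReal.coe_le_coe.2 this
  push_cast at h2
  rwa [Real.coe_toNNReal _ ha, Real.coe_toNNReal _ hb] at h2

lemma rpow_powmean {q a b : ℝ} (hq : 1 ≤ q) (ha : 0 ≤ a) (hb : 0 ≤ b) :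
    (a + b) ^ q ≤ 2 ^ (q - 1) * (a ^ q + b ^ q) := by
  have := NNReal.rpow_add_le_mul_rpow_add_rpow a.toNNReal b.toNNReal hq
  have h2 := NNReal.coe_le_coe.2 this
  push_cast at h2
  rwa [Real.coe_toNNReal _ ha, Real.coe_toNNReal _ hb] at h2

lemma cont_rpow {p : ℝ} (hp : 0 ≤ p) : Continuous fun x : ℝ => x ^ p := by
  rw [continuous_iff_continuousAt]
  exact fun x => Real.continuousAt_rpow_const x p (Or.inr hp)


section OneVarIneq
variable {p : ℝ}

lemma case_pos (hp : 2 ≤ p) {t : ℝ} (ht : 0 ≤ t) : 1 + p * t + t ^ p ≤ (1 + t) ^ p := by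
  have hp0 : (0:ℝ) < p := by linarith
  set φ : ℝ → ℝ := fun t => (1 + t) ^ p - (1 + p * t + t ^ p) with hφ
  have hder : ∀ x ∈ Ioi (0:ℝ), HasDerivAt φ
      (1 * p * (1 + x) ^ (p - 1) - (p + 1 * p * x ^ (p - 1))) x := by
    intro x hx
    have hx0 : 0 < x := hx
    have h1 : HasDerivAt (fun t : ℝ => (1 + t) ^ p) (1 * p * (1 + x) ^ (p - 1)) x := by
      have : HasDerivAt (fun t : ℝ => 1 + t) 1 x := by
        simpa using (hasDerivAt_id x).const_add 1
      exact this.rpow_const (Or.inl (by positivity))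
    have h2 : HasDerivAt (fun t : ℝ => t ^ p) (1 * p * x ^ (p - 1)) x :=
      (hasDerivAt_id x).rpow_const (Or.inl hx0.ne')
    have h3 : HasDerivAt (fun t : ℝ => 1 + p * t + t ^ p) (p + 1 * p * x ^ (p - 1)) x := by
      have : HasDerivAt (fun t : ℝ => 1 + p * t) p x := by
        simpa using ((hasDerivAt_id x).const_mul p).const_add 1
      exact this.add h2
    exact h1.sub h3
  have hmono : MonotoneOn φ (Ici (0:ℝ)) := by
    apply monotoneOn_of_deriv_nonneg (convex_Ici 0)
    · apply ContinuousOn.sub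
      · exact ((cont_rpow hp0.le).comp (continuous_const.add continuous_id)).continuousOn
      · exact (Continuous.add (by continuity) (cont_rpow hp0.le)).continuousOn
    · rw [interior_Ici]
      intro x hx
      exact (hder x hx).differentiableAt.differentiableWithinAt
    · rw [interior_Ici]
      intro x hx
      rw [(hder x hx).deriv]
      have hsup : 1 + x ^ (p-1) ≤ (1 + x) ^ (p-1) := by
        have := rpow_superadd (q := p - 1) (by linarith) (le_refl (0:ℝ) |>.trans zero_le_one) (le_of_lt hx)
        simpa [Real.one_rpow] using this
      have : p * (1 + x ^ (p-1)) ≤ p * (1+x)^(p-1) := by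
        exact mul_le_mul_of_nonneg_left hsup hp0.le
      nlinarith [this]
  have h0 : φ 0 = 0 := by
    simp [hφ, Real.zero_rpow hp0.ne', Real.one_rpow]
  have := hmono (self_mem_Ici) ht ht
  rw [h0] at this
  simpa [hφ] using this


lemma c_le_one (hp : 2 ≤ p) : (2:ℝ) ^ (2 - p) ≤ 1 :=
  Real.rpow_le_one_of_one_le_of_nonpos one_le_two (by linarith)

lemma c_pos : (0:ℝ) < 2 ^ (2 - p) := Real.rpow_pos_of_pos two_pos _

lemma case_mid (hp : 2 ≤ p) {u : ℝ} (hu0 : 0 ≤ u) (hu1 : u ≤ 1) :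
    1 - p * u + 2 ^ (2-p) * u ^ p ≤ (1 - u) ^ p := by
  have hp0 : (0:ℝ) < p := by linarith
  set c : ℝ := (2:ℝ) ^ (2 - p) with hc
  have hc1 : c ≤ 1 := c_le_one hp
  have hc0 : 0 < c := c_pos
  set φ : ℝ → ℝ := fun u => (1 - u) ^ p + p * u - c * u ^ p - 1 with hφ
  have hder : ∀ x ∈ Ioo (0:ℝ) 1, HasDerivAt φ
      ((-1) * p * (1 - x) ^ (p - 1) + p - c * (1 * p * x ^ (p - 1))) x := by
    intro x hx
    have hx1 : (0:ℝ) < 1 - x := by linarith [hx.2]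
    have h1 : HasDerivAt (fun u : ℝ => (1 - u) ^ p) ((-1) * p * (1 - x) ^ (p - 1)) x := by
      have hlin : HasDerivAt (fun u : ℝ => 1 - u) (-1) x := by
        exact (hasDerivAt_id x).const_sub 1
      exact hlin.rpow_const (Or.inl hx1.ne')
    have h2 : HasDerivAt (fun u : ℝ => u ^ p) (1 * p * x ^ (p - 1)) x :=
      (hasDerivAt_id x).rpow_const (Or.inl hx.1.ne')
    have h3 : HasDerivAt (fun u : ℝ => (1 - u) ^ p + p * u) ((-1) * p * (1 - x) ^ (p-1) + p) x := by
      exact h1.add (by simpa using (hasDerivAt_id x).const_mul p)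
    exact (h3.sub (h2.const_mul c)).sub_const 1
  have hmono : MonotoneOn φ (Icc (0:ℝ) 1) := by
    apply monotoneOn_of_deriv_nonneg (convex_Icc 0 1)
    · apply ContinuousOn.sub
      apply ContinuousOn.sub
      · exact (((cont_rpow hp0.le).comp (continuous_const.sub continuous_id)).add
          (continuous_const.mul continuous_id)).continuousOn
      · exact (continuous_const.mul (cont_rpow hp0.le)).continuousOn
      · exact continuousOn_const
    · rw [interior_Icc]
      exact fun x hx => (hder x hx).differentiableAt.differentiableWithinAt
    · rw [interior_Icc]
      intro x hx
      rw [(hder x hx).deriv]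
      have hx1 : (0:ℝ) < 1 - x := by linarith [hx.2]
      have e1 : (1 - x) ^ (p-1) ≤ 1 - x := by
        have := Real.rpow_le_rpow_of_exponent_ge hx1 (by linarith [hx.1]) (by linarith : (1:ℝ) ≤ p - 1)
        simpa using this
      have e2 : x ^ (p-1) ≤ x := by
        have := Real.rpow_le_rpow_of_exponent_ge hx.1 hx.2.le (by linarith : (1:ℝ) ≤ p - 1)
        simpa using this
      have e3 : c * x ^ (p-1) ≤ x := by
        calc c * x ^ (p-1) ≤ 1 * x ^ (p-1) := by
              apply mul_le_mul_of_nonneg_right hc1 (Real.rpow_nonneg hx.1.le _)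
          _ ≤ x := by simpa using e2
      nlinarith
  have h0 : φ 0 = 0 := by
    simp [hφ, Real.zero_rpow hp0.ne', Real.one_rpow]
  have key := hmono (left_mem_Icc.mpr zero_le_one) ⟨hu0, hu1⟩ hu0
  rw [h0] at key
  simp only [hφ] at key
  linarith

lemma case_far (hp : 2 ≤ p) {u : ℝ} (hu : 1 ≤ u) :
    1 - p * u + 2 ^ (2-p) * u ^ p ≤ (u - 1) ^ p := by
  have hp0 : (0:ℝ) < p := by linarith
  set c : ℝ := (2:ℝ) ^ (2 - p) with hc
  have hc1 : c ≤ 1 := c_le_one hp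
  set φ : ℝ → ℝ := fun u => (u - 1) ^ p + p * u - c * u ^ p - 1 with hφ
  have hder : ∀ x ∈ Ioi (1:ℝ), HasDerivAt φ
      (1 * p * (x - 1) ^ (p - 1) + p - c * (1 * p * x ^ (p - 1))) x := by
    intro x hx
    have hx1 : (0:ℝ) < x - 1 := by simpa [sub_pos] using hx
    have h1 : HasDerivAt (fun u : ℝ => (u - 1) ^ p) (1 * p * (x - 1) ^ (p - 1)) x :=
      ((hasDerivAt_id x).sub_const 1).rpow_const (Or.inl hx1.ne')
    have h2 : HasDerivAt (fun u : ℝ => u ^ p) (1 * p * x ^ (p - 1)) x :=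
      (hasDerivAt_id x).rpow_const (Or.inl (by have : (1:ℝ) < x := hx; positivity))
    have h3 : HasDerivAt (fun u : ℝ => (u - 1) ^ p + p * u) (1 * p * (x-1) ^ (p-1) + p) x :=
      h1.add (by simpa using (hasDerivAt_id x).const_mul p)
    exact (h3.sub (h2.const_mul c)).sub_const 1
  have hmono : MonotoneOn φ (Ici (1:ℝ)) := by
    apply monotoneOn_of_deriv_nonneg (convex_Ici 1)
    · apply ContinuousOn.sub
      apply ContinuousOn.sub
      · exact (((cont_rpow hp0.le).comp (continuous_id.sub continuous_const)).add
          (continuous_const.mul continuous_id)).continuousOn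
      · exact (continuous_const.mul (cont_rpow hp0.le)).continuousOn
      · exact continuousOn_const
    · rw [interior_Ici]
      exact fun x hx => (hder x hx).differentiableAt.differentiableWithinAt
    · rw [interior_Ici]
      intro x hx
      rw [(hder x hx).deriv]
      have hx1 : (0:ℝ) < x - 1 := by simpa [sub_pos] using hx
      have epm : x ^ (p-1) ≤ 2 ^ (p-2) * ((x-1) ^ (p-1) + 1) := by
        have h := rpow_powmean (q := p - 1) (by linarith) hx1.le zero_le_one
        have hx' : x - 1 + 1 = x := by ring
        rw [hx', Real.one_rpow] at h
        calc x ^ (p-1) ≤ 2 ^ (p-1-1) * ((x-1)^(p-1) + 1) := h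
          _ = 2 ^ (p-2) * ((x-1)^(p-1) + 1) := by congr 2; ring
      have e4 : c * x ^ (p-1) ≤ (x-1) ^ (p-1) + 1 := by
        have hcc : c * 2 ^ (p-2) = 1 := by
          rw [hc, ← Real.rpow_add two_pos]
          norm_num
        calc c * x ^ (p-1) ≤ c * (2 ^ (p-2) * ((x-1) ^ (p-1) + 1)) := by
              apply mul_le_mul_of_nonneg_left epm (le_of_lt c_pos)
          _ = (c * 2 ^ (p-2)) * ((x-1) ^ (p-1) + 1) := by ring
          _ = (x-1) ^ (p-1) + 1 := by rw [hcc]; ring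
      have h5 : 0 ≤ (x-1) ^ (p-1) + 1 - c * x ^ (p-1) := by linarith
      nlinarith
  have h1 : 0 ≤ φ 1 := by
    have : φ 1 = p - c - 1 := by
      simp only [hφ, sub_self, Real.zero_rpow hp0.ne', Real.one_rpow]
      ring
    rw [this]; linarith
  have key := hmono (self_mem_Ici) hu hu
  simp only [hφ] at key h1 ⊢
  linarith


lemma oneVar (hp : 2 ≤ p) (t : ℝ) : 1 + p * t + 2 ^ (2-p) * |t| ^ p ≤ |1 + t| ^ p := by
  have hp0 : (0:ℝ) < p := by linarith
  rcases le_or_gt 0 t with ht | ht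
  · have h1 : |1 + t| = 1 + t := abs_of_nonneg (by linarith)
    have h2 : |t| = t := abs_of_nonneg ht
    rw [h1, h2]
    have hc : 2 ^ (2-p) * t ^ p ≤ t ^ p := by
      apply mul_le_of_le_one_left (Real.rpow_nonneg ht p) (c_le_one hp)
    have := case_pos hp ht
    linarith
  · rcases le_or_gt (-1) t with htm | htm
    · -- u = -t ∈ (0, 1]
      have h1 : |1 + t| = 1 + t := abs_of_nonneg (by linarith)
      have h2 : |t| = -t := abs_of_neg ht
      rw [h1, h2]
      have := case_mid hp (u := -t) (by linarith) (by linarith)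
      have e : 1 - -t = 1 + t := by ring
      rw [e] at this
      linarith
    · have h1 : |1 + t| = -t - 1 := by
        rw [abs_of_neg (by linarith)]; ring
      have h2 : |t| = -t := abs_of_neg ht
      rw [h1, h2]
      have := case_far hp (u := -t) (by linarith)
      linarith

lemma lemA (hp : 2 ≤ p) (a y : ℝ) :
    |a| ^ p + p * |a| ^ (p-2) * a * y + 2 ^ (2-p) * |y| ^ p ≤ |a + y| ^ p := by
  have hp0 : (0:ℝ) < p := by linarith
  rcases eq_or_ne a 0 with rfl | ha
  · simp only [abs_zero, Real.zero_rpow hp0.ne', mul_zero, zero_mul, zero_add, add_zero]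
    exact mul_le_of_le_one_left (Real.rpow_nonneg (abs_nonneg y) p) (c_le_one hp)
  · have ha' : 0 < |a| := abs_pos.mpr ha
    have key := oneVar hp (y / a)
    have e1 : |a| ^ p * |1 + y / a| ^ p = |a + y| ^ p := by
      rw [← Real.mul_rpow (abs_nonneg _) (abs_nonneg _), ← abs_mul]
      congr 2
      field_simp
    have e2 : |a| ^ p * (p * (y / a)) = p * |a| ^ (p-2) * a * y := by
      have : |a| ^ p = |a| ^ (p-2) * a ^ 2 := by
        rw [← sq_abs, ← Real.rpow_two, ← Real.rpow_add ha']
        norm_num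
      rw [this]
      field_simp
    have e3 : |a| ^ p * (2 ^ (2-p) * |y / a| ^ p) = 2 ^ (2-p) * |y| ^ p := by
      rw [abs_div, Real.div_rpow (abs_nonneg _) (abs_nonneg _)]
      field_simp [(Real.rpow_pos_of_pos ha' p).ne']
    calc |a| ^ p + p * |a| ^ (p-2) * a * y + 2 ^ (2-p) * |y| ^ p
        = |a| ^ p * (1 + p * (y/a) + 2 ^ (2-p) * |y/a| ^ p) := by
          rw [mul_add, mul_add, mul_one, e2, e3]
      _ ≤ |a| ^ p * |1 + y/a| ^ p := by
          apply mul_le_mul_of_nonneg_left key (Real.rpow_nonneg (abs_nonneg a) p)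
      _ = |a + y| ^ p := e1


end OneVarIneq

section SumIneqs
variable {V : Type*} [Fintype V] {p : ℝ}

/-- weighted Jensen for |·|^p -/
lemma jensen_abs_rpow (hp : 1 ≤ p) (w z : V → ℝ) (hw : ∀ t, 0 ≤ w t)
    (hw1 : ∑ t, w t = 1) :
    |∑ t, w t * z t| ^ p ≤ ∑ t, w t * |z t| ^ p := by
  have h1 : |∑ t, w t * z t| ≤ ∑ t, w t * |z t| := by
    calc |∑ t, w t * z t| ≤ ∑ t, |w t * z t| := Finset.abs_sum_le_sum_abs _ _
      _ = ∑ t, w t * |z t| := by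
          apply Finset.sum_congr rfl
          intro t _
          rw [abs_mul, abs_of_nonneg (hw t)]
  calc |∑ t, w t * z t| ^ p ≤ (∑ t, w t * |z t|) ^ p := by
        apply Real.rpow_le_rpow (abs_nonneg _) h1 (by linarith)
    _ ≤ ∑ t, w t * |z t| ^ p :=
        Real.rpow_arith_mean_le_arith_mean_rpow univ w (fun t => |z t|)
          (fun t _ => hw t) hw1 (fun t _ => abs_nonneg _) hp

/-- weighted Minkowski -/
lemma minkowski_w (hp : 1 ≤ p) (ν F G : V → ℝ) (hν : ∀ s, 0 ≤ ν s) :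
    (∑ s, ν s * |F s + G s| ^ p) ^ (1/p) ≤
      (∑ s, ν s * |F s| ^ p) ^ (1/p) + (∑ s, ν s * |G s| ^ p) ^ (1/p) := by
  have hp0 : (0:ℝ) < p := by linarith
  have key : ∀ (X : V → ℝ) (s : V), ν s * |X s| ^ p = |ν s ^ (1/p) * X s| ^ p := by
    intro X s
    rw [abs_mul, Real.mul_rpow (abs_nonneg _) (abs_nonneg _),
      abs_of_nonneg (Real.rpow_nonneg (hν s) _), ← Real.rpow_mul (hν s),
      one_div_mul_cancel hp0.ne', Real.rpow_one]
  have H := Real.Lp_add_le univ (fun s => ν s ^ (1/p) * F s) (fun s => ν s ^ (1/p) * G s) hp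
  simp only [← mul_add] at H
  calc (∑ s, ν s * |F s + G s| ^ p) ^ (1/p)
      = (∑ s, |ν s ^ (1/p) * (F s + G s)| ^ p) ^ (1/p) := by
        congr 1; exact Finset.sum_congr rfl fun s _ => key (fun s => F s + G s) s
    _ ≤ (∑ s, |ν s ^ (1/p) * F s| ^ p) ^ (1/p) + (∑ s, |ν s ^ (1/p) * G s| ^ p) ^ (1/p) := H
    _ = (∑ s, ν s * |F s| ^ p) ^ (1/p) + (∑ s, ν s * |G s| ^ p) ^ (1/p) := by
        congr 1 <;> (congr 1; exact Finset.sum_congr rfl fun s _ => (key _ s).symm)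

/-- Cauchy-Schwarz with rpow 1/2 -/
lemma cs_rpow (F G : V → ℝ) (hF : ∀ s, 0 ≤ F s) (hG : ∀ s, 0 ≤ G s) :
    ∑ s, F s * G s ≤ (∑ s, F s ^ (2:ℝ)) ^ ((1:ℝ)/2) * (∑ s, G s ^ (2:ℝ)) ^ ((1:ℝ)/2) := by
  have cs := Finset.sum_mul_sq_le_sq_mul_sq univ F G
  have h2 : ∀ (X : V → ℝ), ∑ s, X s ^ (2:ℝ) = ∑ s, X s ^ (2:ℕ) := by
    intro X
    apply Finset.sum_congr rfl
    intro s _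
    rw [← Real.rpow_natCast (X s) 2]
    norm_num
  rw [h2 F, h2 G]
  have hFG : 0 ≤ ∑ s, F s * G s := Finset.sum_nonneg fun s _ => mul_nonneg (hF s) (hG s)
  have h3 : (∑ s, F s * G s) = ((∑ s, F s * G s) ^ (2:ℕ)) ^ ((1:ℝ)/2) := by
    rw [← Real.rpow_natCast (∑ s, F s * G s) 2, ← Real.rpow_mul hFG]
    norm_num
  rw [h3, ← Real.mul_rpow (by positivity) (by positivity)]
  apply Real.rpow_le_rpow (by positivity) cs (by norm_num)


end SumIneqs

section GraphBasics
variable {V : Type*} [Fintype V] {ω : V → V → ℝ}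

lemma W_pos (hdeg : ∀ s : V, 0 < wdeg ω s) [Nonempty V] : 0 < ∑ t, wdeg ω t :=
  Finset.sum_pos (fun s _ => hdeg s) univ_nonempty

lemma nu_pos (hdeg : ∀ s : V, 0 < wdeg ω s) [Nonempty V] (s : V) : 0 < nu ω s :=
  div_pos (hdeg s) (W_pos hdeg)

lemma sum_nu (hdeg : ∀ s : V, 0 < wdeg ω s) [Nonempty V] : ∑ s, nu ω s = 1 := by
  simp only [nu, ← Finset.sum_div]
  exact div_self (W_pos hdeg).ne'

lemma markov_real (f : V → ℝ) (s : V) :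
    markovW ω f s = (wdeg ω s)⁻¹ * ∑ t, ω s t * f t := by
  simp [markovW, smul_eq_mul]

lemma markov_cpx (u : V → ℂ) (s : V) :
    markovW ω u s = (((wdeg ω s)⁻¹ : ℝ) : ℂ) * ∑ t, ((ω s t : ℝ) : ℂ) * u t := by
  simp [markovW, Complex.real_smul]

lemma markov_coe (h : V → ℝ) (s : V) :
    markovW ω (fun t => ((h t : ℝ) : ℂ)) s = ((markovW ω h s : ℝ) : ℂ) := by
  rw [markov_cpx, markov_real]
  push_cast
  ring

lemma markov_sub_const (u : V → ℂ) (c : ℂ) (hdeg : ∀ s : V, 0 < wdeg ω s) (s : V) :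
    markovW ω (fun t => u t - c) s = markovW ω u s - c := by
  rw [markov_cpx, markov_cpx]
  have : ∑ t, ((ω s t : ℝ) : ℂ) * (u t - c) = (∑ t, ((ω s t : ℝ) : ℂ) * u t) - (wdeg ω s : ℂ) * c := by
    simp only [mul_sub]
    rw [Finset.sum_sub_distrib, ← Finset.sum_mul]
    push_cast [wdeg]
    ring
  rw [this, mul_sub]
  congr 1
  rw [← mul_assoc]
  have hd : ((wdeg ω s : ℝ) : ℂ) ≠ 0 := by
    exact_mod_cast (hdeg s).ne'
  push_cast
  field_simp

/-- weighted average bound for markov -/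
lemma markov_norm_le (u : V → ℂ) (K : ℝ) (hu : ∀ t, ‖u t‖ ≤ K)
    (hnn : NonnegW ω) (hdeg : ∀ s : V, 0 < wdeg ω s) (s : V) :
    ‖markovW ω u s‖ ≤ K := by
  rw [markov_cpx]
  rw [norm_mul]
  have h1 : ‖∑ t, ((ω s t : ℝ) : ℂ) * u t‖ ≤ ∑ t, ω s t * K := by
    refine (norm_sum_le _ _).trans ?_
    apply Finset.sum_le_sum
    intro t _
    rw [norm_mul, Complex.norm_real, Real.norm_eq_abs, abs_of_nonneg (hnn s t)]
    exact mul_le_mul_of_nonneg_left (hu t) (hnn s t)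
  have h2 : ‖(((wdeg ω s)⁻¹ : ℝ) : ℂ)‖ = (wdeg ω s)⁻¹ := by
    rw [Complex.norm_real, Real.norm_eq_abs, abs_of_nonneg (inv_nonneg.mpr (hdeg s).le)]
  rw [h2]
  calc (wdeg ω s)⁻¹ * ‖∑ t, ((ω s t : ℝ) : ℂ) * u t‖ ≤ (wdeg ω s)⁻¹ * (∑ t, ω s t * K) := by
        exact mul_le_mul_of_nonneg_left h1 (inv_nonneg.mpr (hdeg s).le)
    _ = K := by
        rw [← Finset.sum_mul, ← wdeg, ← mul_assoc, inv_mul_cancel₀ (hdeg s).ne', one_mul]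

lemma T_norm_le (u : V → ℂ) (K : ℝ) (hu : ∀ t, ‖u t‖ ≤ K)
    (hnn : NonnegW ω) (hdeg : ∀ s : V, 0 < wdeg ω s) [Nonempty V] (s : V) :
    ‖markovW ω u s - ∑ t, ((nu ω t : ℝ) : ℂ) * u t‖ ≤ 2 * K := by
  have h1 : ‖∑ t, ((nu ω t : ℝ) : ℂ) * u t‖ ≤ K := by
    refine (norm_sum_le _ _).trans ?_
    have : ∀ t, ‖((nu ω t : ℝ) : ℂ) * u t‖ ≤ nu ω t * K := by
      intro t
      rw [norm_mul, Complex.norm_real, Real.norm_eq_abs,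
        abs_of_nonneg (nu_pos hdeg t).le]
      exact mul_le_mul_of_nonneg_left (hu t) (nu_pos hdeg t).le
    calc ∑ t, ‖((nu ω t : ℝ) : ℂ) * u t‖ ≤ ∑ t, nu ω t * K := Finset.sum_le_sum fun t _ => this t
      _ = K := by rw [← Finset.sum_mul, sum_nu hdeg, one_mul]
  calc ‖markovW ω u s - ∑ t, ((nu ω t : ℝ) : ℂ) * u t‖
      ≤ ‖markovW ω u s‖ + ‖∑ t, ((nu ω t : ℝ) : ℂ) * u t‖ := norm_sub_le _ _
    _ ≤ K + K := add_le_add (markov_norm_le u K hu hnn hdeg s) h1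
    _ = 2 * K := by ring

/-- mean of A f equals mean of f (uses symmetry) -/
lemma mean_markov (hsym : SymmW ω) (hdeg : ∀ s : V, 0 < wdeg ω s) (f : V → ℝ) :
    ∑ s, nu ω s * markovW ω f s = ∑ t, nu ω t * f t := by
  have key : ∀ s, nu ω s * markovW ω f s = ∑ t, (ω s t / ∑ r, wdeg ω r) * f t := by
    intro s
    rw [markov_real, nu]
    have e : wdeg ω s / (∑ r, wdeg ω r) * ((wdeg ω s)⁻¹ * ∑ t, ω s t * f t)
        = (∑ r, wdeg ω r)⁻¹ * ∑ t, ω s t * f t := by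
      have hd := (hdeg s).ne'
      field_simp
    rw [e, Finset.mul_sum]
    apply Finset.sum_congr rfl
    intro t _
    rw [div_mul_eq_mul_div, mul_comm ((∑ r, wdeg ω r)⁻¹), mul_assoc]
    rw [div_eq_mul_inv, mul_comm (f t)]
    ring
  rw [Finset.sum_congr rfl fun s _ => key s, Finset.sum_comm]
  apply Finset.sum_congr rfl
  intro t _
  rw [← Finset.sum_mul, nu]
  congr 1
  rw [← Finset.sum_div]
  congr 1
  rw [wdeg]
  exact Finset.sum_congr rfl fun s _ => hsym s t

/-- Pythagoras-type inequality: subtracting the mean decreases L2 norm (complex). -/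
lemma sub_mean_le (hdeg : ∀ s : V, 0 < wdeg ω s) [Nonempty V] (u : V → ℂ) :
    ∑ s, nu ω s * ‖u s - ∑ t, ((nu ω t : ℝ) : ℂ) * u t‖ ^ (2:ℝ)
      ≤ ∑ s, nu ω s * ‖u s‖ ^ (2:ℝ) := by
  set m : ℂ := ∑ t, ((nu ω t : ℝ) : ℂ) * u t with hm
  have sq : ∀ x : ℂ, ‖x‖ ^ (2:ℝ) = Complex.normSq x := by
    intro x
    rw [show (2:ℝ) = ((2:ℕ):ℝ) by norm_num, Real.rpow_natCast,
      Complex.sq_norm]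
  simp only [sq]
  have e1 : ∑ s, nu ω s * (u s * (starRingEnd ℂ) m).re = Complex.normSq m := by
    have e2 : ∀ s, nu ω s * (u s * (starRingEnd ℂ) m).re
        = ((((nu ω s : ℝ)) : ℂ) * (u s * (starRingEnd ℂ) m)).re := by
      intro s
      rw [Complex.re_ofReal_mul]
    rw [Finset.sum_congr rfl fun s _ => e2 s, ← Complex.re_sum]
    have e3 : ∑ s, (((nu ω s : ℝ)) : ℂ) * (u s * (starRingEnd ℂ) m)
        = m * (starRingEnd ℂ) m := by
      rw [hm, Finset.sum_mul]
      apply Finset.sum_congr rfl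
      intro s _
      ring
    rw [e3, Complex.mul_conj, Complex.ofReal_re]
  have expand : ∑ s, nu ω s * (Complex.normSq (u s - m) : ℝ)
      = (∑ s, nu ω s * Complex.normSq (u s)) - Complex.normSq m := by
    have e4 : ∀ s, nu ω s * (Complex.normSq (u s - m) : ℝ)
        = nu ω s * Complex.normSq (u s) + nu ω s * Complex.normSq m
          - 2 * (nu ω s * (u s * (starRingEnd ℂ) m).re) := by
      intro s
      rw [Complex.normSq_sub]
      ring
    rw [Finset.sum_congr rfl fun s _ => e4 s, Finset.sum_sub_distrib, Finset.sum_add_distrib,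
      ← Finset.sum_mul, ← Finset.mul_sum, sum_nu hdeg, e1]
    ring
  rw [expand]
  have := Complex.normSq_nonneg m
  linarith


end GraphBasics

section Interp
variable {V : Type*}

def af (c : ℝ) (h : V → ℝ) (z : ℂ) (t : V) : ℂ :=
  if h t = 0 then 0 else ((h t / |h t| : ℝ) : ℂ) * Complex.exp (((c * Real.log |h t| : ℝ) : ℂ) * z)

lemma af_norm (c : ℝ) (h : V → ℝ) (z : ℂ) (t : V) (ht : h t ≠ 0) :
    ‖af c h z t‖ = |h t| ^ (c * z.re) := by
  rw [af, if_neg ht, norm_mul, Complex.norm_real, Real.norm_eq_abs, abs_div, abs_abs,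
    div_self (abs_ne_zero.mpr ht), one_mul, Complex.norm_exp]
  rw [Real.rpow_def_of_pos (abs_pos.mpr ht)]
  congr 1
  simp [Complex.re_ofReal_mul]
  ring

lemma af_norm_zero (c : ℝ) (h : V → ℝ) (z : ℂ) (t : V) (ht : h t = 0) :
    af c h z t = 0 := by rw [af, if_pos ht]

lemma af_diff (c : ℝ) (h : V → ℝ) (t : V) : Differentiable ℂ (fun z => af c h z t) := by
  by_cases ht : h t = 0
  · simp only [af, if_pos ht]
    exact differentiable_const 0
  · simp only [af, if_neg ht]
    apply Differentiable.const_mul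
    exact (differentiable_id.const_mul _).cexp


variable [Fintype V]

def Ff (ω : V → V → ℝ) (p : ℝ) (h w : V → ℝ) (z : ℂ) : ℂ :=
  ∑ s, ((nu ω s : ℝ) : ℂ) * (af p w (1 - z/2) s *
    (markovW ω (af (p/2) h z) s - ∑ t, ((nu ω t : ℝ) : ℂ) * af (p/2) h z t))

variable {ω : V → V → ℝ} {p : ℝ}

lemma Ff_diff (hp : 2 ≤ p) (h w : V → ℝ) : Differentiable ℂ (Ff ω p h w) := by
  apply Differentiable.fun_sum
  intro s _
  apply Differentiable.const_mul
  apply Differentiable.mul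
  · exact (af_diff p w s).comp (differentiable_const (1:ℂ) |>.sub (differentiable_id.div_const 2))
  · apply Differentiable.sub
    · have : (fun z => markovW ω (af (p/2) h z) s)
          = fun z => (((wdeg ω s)⁻¹ : ℝ) : ℂ) * ∑ t, ((ω s t : ℝ) : ℂ) * af (p/2) h z t := by
        funext z; exact markov_cpx _ s
      rw [this]
      apply Differentiable.const_mul
      apply Differentiable.fun_sum
      intro t _
      exact (af_diff (p/2) h t).const_mul _
    · apply Differentiable.fun_sum
      intro t _
      exact (af_diff (p/2) h t).const_mul _


lemma Ff_norm_le (z : ℂ) (h w : V → ℝ) (B D : V → ℝ)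
    (hB : ∀ s, ‖af p w (1 - z/2) s‖ ≤ B s)
    (hD : ∀ s, ‖markovW ω (af (p/2) h z) s - ∑ t, ((nu ω t : ℝ) : ℂ) * af (p/2) h z t‖ ≤ D s)
    (hdeg : ∀ s : V, 0 < wdeg ω s) [Nonempty V] :
    ‖Ff ω p h w z‖ ≤ ∑ s, nu ω s * (B s * D s) := by
  refine (norm_sum_le _ _).trans ?_
  apply Finset.sum_le_sum
  intro s _
  rw [norm_mul, norm_mul, Complex.norm_real, Real.norm_eq_abs, abs_of_nonneg (nu_pos hdeg s).le]
  apply mul_le_mul_of_nonneg_left _ (nu_pos hdeg s).le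
  exact mul_le_mul (hB s) (hD s) (norm_nonneg _) ((norm_nonneg _).trans (hB s))

lemma rpow_le_max {x a b e : ℝ} (hx : 0 < x) (hae : a ≤ e) (heb : e ≤ b) :
    x ^ e ≤ max (x ^ a) (x ^ b) := by
  rcases le_or_gt 1 x with hx1 | hx1
  · exact le_max_of_le_right (Real.rpow_le_rpow_of_exponent_le hx1 heb)
  · exact le_max_of_le_left (Real.rpow_le_rpow_of_exponent_ge hx hx1.le hae)

/-- value of `af` at a real point -/
lemma af_real (c : ℝ) (h : V → ℝ) (r : ℝ) (t : V) (ht : h t ≠ 0) :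
    af c h (r : ℂ) t = ((h t / |h t| * |h t| ^ (c * r) : ℝ) : ℂ) := by
  rw [af, if_neg ht, ← Complex.ofReal_mul, Complex.ofReal_mul (h t / |h t|), ← Complex.ofReal_exp]
  congr 2
  rw [Real.rpow_def_of_pos (abs_pos.mpr ht)]
  congr 1
  ring

theorem interp_key [Nonempty V] (hp : 2 ≤ p) (hnn : NonnegW ω)
    (hdeg : ∀ s : V, 0 < wdeg ω s) {ε : ℝ} (hε : 0 ≤ ε)
    (hA : ∀ u : V → ℂ, (∑ s, (nu ω s : ℂ) * u s) = 0 →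
      lpNormW ω 2 (markovW ω u) ≤ ε * lpNormW ω 2 u)
    (h : V → ℝ) (hmean : ∑ s, nu ω s * h s = 0) :
    (∑ s, nu ω s * |markovW ω h s| ^ p) ^ ((1:ℝ)/p)
      ≤ (2 ^ (1-(2:ℝ)/p) * ε ^ ((2:ℝ)/p)) * (∑ s, nu ω s * |h s| ^ p) ^ ((1:ℝ)/p) := by
  have hp0 : (0:ℝ) < p := by linarith
  set w : V → ℝ := markovW ω h with hw
  set M : ℝ := ∑ s, nu ω s * |w s| ^ p with hM
  set Hp : ℝ := ∑ s, nu ω s * |h s| ^ p with hHp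
  have hM0 : 0 ≤ M := Finset.sum_nonneg fun s _ =>
    mul_nonneg (nu_pos hdeg s).le (Real.rpow_nonneg (abs_nonneg _) _)
  have hHp0 : 0 ≤ Hp := Finset.sum_nonneg fun s _ =>
    mul_nonneg (nu_pos hdeg s).le (Real.rpow_nonneg (abs_nonneg _) _)
  -- case ε = 0
  rcases eq_or_lt_of_le hε with hε0 | hεpos
  · -- then markovW ω h = 0
    have hA0 := hA (fun t => ((h t : ℝ) : ℂ)) (by
      rw [show (0:ℂ) = ((0:ℝ):ℂ) by norm_num, ← hmean]
      push_cast
      rfl)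
    rw [← hε0, zero_mul] at hA0
    have hlp : lpNormW ω 2 (markovW ω (fun t => ((h t : ℝ) : ℂ))) = 0 :=
      le_antisymm hA0 (Real.rpow_nonneg (Finset.sum_nonneg fun s _ =>
        mul_nonneg (nu_pos hdeg s).le (Real.rpow_nonneg (norm_nonneg _) _)) _)
    have hsum0 : ∑ s, nu ω s * ‖markovW ω (fun t => ((h t : ℝ) : ℂ)) s‖ ^ (2:ℝ) = 0 := by
      by_contra hne
      have hpos : 0 < ∑ s, nu ω s * ‖markovW ω (fun t => ((h t : ℝ) : ℂ)) s‖ ^ (2:ℝ) :=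
        lt_of_le_of_ne (Finset.sum_nonneg fun s _ =>
          mul_nonneg (nu_pos hdeg s).le (Real.rpow_nonneg (norm_nonneg _) _)) (Ne.symm hne)
      have := Real.rpow_pos_of_pos hpos (1/(2:ℝ))
      rw [show lpNormW ω 2 (markovW ω (fun t => ((h t : ℝ) : ℂ)))
        = (∑ s, nu ω s * ‖markovW ω (fun t => ((h t : ℝ) : ℂ)) s‖ ^ (2:ℝ)) ^ (1/(2:ℝ)) from rfl]
        at hlp
      rw [hlp] at this
      exact lt_irrefl 0 this
    have hw0 : ∀ s, w s = 0 := by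
      intro s
      have hterm := (Finset.sum_eq_zero_iff_of_nonneg (fun s _ =>
        mul_nonneg (nu_pos hdeg s).le (Real.rpow_nonneg (norm_nonneg _) _))).mp hsum0 s (mem_univ s)
      have h2 : ‖markovW ω (fun t => ((h t : ℝ) : ℂ)) s‖ ^ (2:ℝ) = 0 := by
        rcases mul_eq_zero.mp hterm with h' | h'
        · exact absurd h' (nu_pos hdeg s).ne'
        · exact h'
      have h3 : ‖markovW ω (fun t => ((h t : ℝ) : ℂ)) s‖ = 0 := by
        by_contra hne
        have : 0 < ‖markovW ω (fun t => ((h t : ℝ) : ℂ)) s‖ :=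
          lt_of_le_of_ne (norm_nonneg _) (Ne.symm hne)
        exact absurd h2 (Real.rpow_pos_of_pos this _).ne'
      rw [markov_coe] at h3
      simpa using h3
    have hMzero : M = 0 := by
      rw [hM]
      apply Finset.sum_eq_zero
      intro s _
      rw [hw0 s, abs_zero, Real.zero_rpow hp0.ne', mul_zero]
    rw [hMzero, Real.zero_rpow (by positivity : (1:ℝ)/p ≠ 0)]
    positivity
  -- case M = 0
  rcases eq_or_lt_of_le hM0 with hM0' | hMpos
  · rw [← hM0', Real.zero_rpow (by positivity : (1:ℝ)/p ≠ 0)]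
    positivity
  -- main case
  have hθ : ((2:ℝ)/p) ≤ 1 := by
    rw [div_le_one hp0]; linarith
  have hθ0 : (0:ℝ) ≤ 2/p := by positivity
  -- re of 1 - z/2
  have hre : ∀ z : ℂ, (1 - z/2).re = 1 - z.re/2 := by
    intro z
    simp [Complex.sub_re, Complex.div_re, Complex.normSq]
  -- line re = 0 bound
  have ha : ∀ z : ℂ, z.re = 0 → ‖Ff ω p h w z‖ ≤ 2 * M := by
    intro z hz0
    have hB : ∀ s, ‖af p w (1 - z/2) s‖ ≤ |w s| ^ p := by
      intro s
      by_cases hws : w s = 0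
      · rw [af_norm_zero p w _ s hws, norm_zero]
        exact Real.rpow_nonneg (abs_nonneg _) _
      · rw [af_norm p w _ s hws, hre, hz0]
        norm_num
    have hD : ∀ s, ‖markovW ω (af (p/2) h z) s - ∑ t, ((nu ω t : ℝ) : ℂ) * af (p/2) h z t‖
        ≤ 2 * 1 := by
      intro s
      apply T_norm_le _ 1 _ hnn hdeg
      intro t
      by_cases hht : h t = 0
      · rw [af_norm_zero _ h z t hht, norm_zero]; norm_num
      · rw [af_norm _ h z t hht, hz0, mul_zero, Real.rpow_zero]
    calc ‖Ff ω p h w z‖ ≤ ∑ s, nu ω s * (|w s| ^ p * (2*1)) :=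
          Ff_norm_le z h w _ (fun _ => 2*1) hB hD hdeg
      _ = 2 * M := by
          rw [hM, Finset.mul_sum]
          exact Finset.sum_congr rfl fun s _ => by ring
  -- line re = 1 bound
  have hb : ∀ z : ℂ, z.re = 1 →
      ‖Ff ω p h w z‖ ≤ ε * M ^ ((1:ℝ)/2) * Hp ^ ((1:ℝ)/2) := by
    intro z hz1
    set B : V → ℝ := fun s => ‖af p w (1 - z/2) s‖ with hBdef
    set D : V → ℝ := fun s =>
      ‖markovW ω (af (p/2) h z) s - ∑ t, ((nu ω t : ℝ) : ℂ) * af (p/2) h z t‖ with hDdef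
    have step1 : ‖Ff ω p h w z‖ ≤ ∑ s, nu ω s * (B s * D s) :=
      Ff_norm_le z h w B D (fun s => le_refl _) (fun s => le_refl _) hdeg
    have nuhalf : ∀ s, (nu ω s) ^ ((1:ℝ)/2) * (nu ω s) ^ ((1:ℝ)/2) = nu ω s := by
      intro s
      rw [← Real.rpow_add (nu_pos hdeg s)]
      norm_num
    have step2 : ∑ s, nu ω s * (B s * D s) ≤
        (∑ s, nu ω s * B s ^ (2:ℝ)) ^ ((1:ℝ)/2) * (∑ s, nu ω s * D s ^ (2:ℝ)) ^ ((1:ℝ)/2) := by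
      have e1 : ∀ s, nu ω s * (B s * D s)
          = ((nu ω s) ^ ((1:ℝ)/2) * B s) * ((nu ω s) ^ ((1:ℝ)/2) * D s) := by
        intro s
        rw [show ((nu ω s) ^ ((1:ℝ)/2) * B s) * ((nu ω s) ^ ((1:ℝ)/2) * D s)
          = ((nu ω s) ^ ((1:ℝ)/2) * (nu ω s) ^ ((1:ℝ)/2)) * (B s * D s) by ring, nuhalf s]
      have e2 : ∀ (X : V → ℝ), (∀ s, 0 ≤ X s) →
          ∀ s, ((nu ω s) ^ ((1:ℝ)/2) * X s) ^ (2:ℝ) = nu ω s * X s ^ (2:ℝ) := by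
        intro X hX s
        rw [Real.mul_rpow (Real.rpow_nonneg (nu_pos hdeg s).le _) (hX s),
          ← Real.rpow_mul (nu_pos hdeg s).le]
        norm_num
      calc ∑ s, nu ω s * (B s * D s)
          = ∑ s, ((nu ω s) ^ ((1:ℝ)/2) * B s) * ((nu ω s) ^ ((1:ℝ)/2) * D s) :=
            Finset.sum_congr rfl fun s _ => e1 s
        _ ≤ (∑ s, ((nu ω s) ^ ((1:ℝ)/2) * B s) ^ (2:ℝ)) ^ ((1:ℝ)/2)
              * (∑ s, ((nu ω s) ^ ((1:ℝ)/2) * D s) ^ (2:ℝ)) ^ ((1:ℝ)/2) := by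
            apply cs_rpow
            · intro s
              exact mul_nonneg (Real.rpow_nonneg (nu_pos hdeg s).le _) (norm_nonneg _)
            · intro s
              exact mul_nonneg (Real.rpow_nonneg (nu_pos hdeg s).le _) (norm_nonneg _)
        _ = (∑ s, nu ω s * B s ^ (2:ℝ)) ^ ((1:ℝ)/2) * (∑ s, nu ω s * D s ^ (2:ℝ)) ^ ((1:ℝ)/2) := by
            rw [Finset.sum_congr rfl fun s _ => e2 B (fun s => norm_nonneg _) s,
              Finset.sum_congr rfl fun s _ => e2 D (fun s => norm_nonneg _) s]
    have hBM : ∑ s, nu ω s * B s ^ (2:ℝ) = M := by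
      rw [hM]
      apply Finset.sum_congr rfl
      intro s _
      congr 1
      by_cases hws : w s = 0
      · rw [hBdef]
        simp only [af_norm_zero p w _ s hws, norm_zero, hws, abs_zero]
        rw [Real.zero_rpow (by norm_num : (2:ℝ) ≠ 0), Real.zero_rpow hp0.ne']
      · rw [hBdef]
        simp only [af_norm p w _ s hws, hre, hz1]
        rw [← Real.rpow_mul (abs_nonneg _)]
        congr 1
        ring
    have hDH : (∑ s, nu ω s * D s ^ (2:ℝ)) ^ ((1:ℝ)/2) ≤ ε * Hp ^ ((1:ℝ)/2) := by
      set u : V → ℂ := af (p/2) h z with hu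
      set mH : ℂ := ∑ t, ((nu ω t : ℝ) : ℂ) * u t with hmH
      have hmean0 : ∑ s, ((nu ω s : ℝ) : ℂ) * (u s - mH) = 0 := by
        simp only [mul_sub]
        rw [Finset.sum_sub_distrib, ← Finset.sum_mul]
        have : (∑ s, ((nu ω s : ℝ) : ℂ)) = 1 := by
          rw [← Complex.ofReal_sum, sum_nu hdeg, Complex.ofReal_one]
        rw [this, one_mul, ← hmH, sub_self]
      have happ := hA (fun t => u t - mH) hmean0
      have hTeq : ∀ s, markovW ω (fun t => u t - mH) s = markovW ω u s - mH :=
        fun s => markov_sub_const u mH hdeg s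
      have lhs_eq : (∑ s, nu ω s * D s ^ (2:ℝ)) ^ ((1:ℝ)/2)
          = lpNormW ω 2 (markovW ω (fun t => u t - mH)) := by
        rw [lpNormW]
        congr 1
        apply Finset.sum_congr rfl
        intro s _
        rw [hTeq s]
      have rhs_le : lpNormW ω 2 (fun t => u t - mH) ≤ Hp ^ ((1:ℝ)/2) := by
        rw [lpNormW]
        have hHu : ∑ s, nu ω s * ‖u s‖ ^ (2:ℝ) = Hp := by
          rw [hHp]
          apply Finset.sum_congr rfl
          intro t _
          congr 1
          by_cases hht : h t = 0
          · rw [hu]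
            simp only [af_norm_zero _ h z t hht, norm_zero, hht, abs_zero]
            rw [Real.zero_rpow (by norm_num : (2:ℝ) ≠ 0), Real.zero_rpow hp0.ne']
          · rw [hu]
            simp only [af_norm _ h z t hht, hz1, mul_one]
            rw [← Real.rpow_mul (abs_nonneg _)]
            congr 1
            ring
        apply Real.rpow_le_rpow
        · apply Finset.sum_nonneg
          intro s _
          exact mul_nonneg (nu_pos hdeg s).le (Real.rpow_nonneg (norm_nonneg _) _)
        · rw [← hHu]
          exact sub_mean_le hdeg u
        · norm_num
      calc (∑ s, nu ω s * D s ^ (2:ℝ)) ^ ((1:ℝ)/2)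
          = lpNormW ω 2 (markovW ω (fun t => u t - mH)) := lhs_eq
        _ ≤ ε * lpNormW ω 2 (fun t => u t - mH) := happ
        _ ≤ ε * Hp ^ ((1:ℝ)/2) := mul_le_mul_of_nonneg_left rhs_le hε
    calc ‖Ff ω p h w z‖ ≤ ∑ s, nu ω s * (B s * D s) := step1
      _ ≤ (∑ s, nu ω s * B s ^ (2:ℝ)) ^ ((1:ℝ)/2) * (∑ s, nu ω s * D s ^ (2:ℝ)) ^ ((1:ℝ)/2) := step2
      _ ≤ M ^ ((1:ℝ)/2) * (ε * Hp ^ ((1:ℝ)/2)) := by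
          rw [hBM]
          exact mul_le_mul_of_nonneg_left hDH (Real.rpow_nonneg hM0 _)
      _ = ε * M ^ ((1:ℝ)/2) * Hp ^ ((1:ℝ)/2) := by ring
  -- boundedness on the strip
  have hBdd : BddAbove ((norm ∘ (Ff ω p h w)) ''
      (Complex.HadamardThreeLines.verticalClosedStrip 0 1)) := by
    set K : ℝ := 1 + ∑ t, |h t| ^ (p/2) with hK
    have hK1 : (1:ℝ) ≤ K := by
      rw [hK]
      have : (0:ℝ) ≤ ∑ t, |h t| ^ (p/2) :=
        Finset.sum_nonneg fun t _ => Real.rpow_nonneg (abs_nonneg _) _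
      linarith
    set B : V → ℝ := fun s => max (|w s| ^ (p/2)) (|w s| ^ p) with hBdef
    refine ⟨∑ s, nu ω s * (B s * (2*K)), ?_⟩
    rintro y ⟨z, hzs, rfl⟩
    have hz01 : z.re ∈ Set.Icc (0:ℝ) 1 := hzs
    have hB : ∀ s, ‖af p w (1 - z/2) s‖ ≤ B s := by
      intro s
      by_cases hws : w s = 0
      · rw [af_norm_zero p w _ s hws, norm_zero, hBdef]
        exact le_max_of_le_left (Real.rpow_nonneg (abs_nonneg _) _)
      · rw [af_norm p w _ s hws, hre, hBdef]
        apply rpow_le_max (abs_pos.mpr hws)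
        · nlinarith [hz01.1, hz01.2]
        · nlinarith [hz01.1, hz01.2]
    have hD : ∀ s, ‖markovW ω (af (p/2) h z) s - ∑ t, ((nu ω t : ℝ) : ℂ) * af (p/2) h z t‖
        ≤ 2 * K := by
      intro s
      apply T_norm_le _ K _ hnn hdeg
      intro t
      by_cases hht : h t = 0
      · rw [af_norm_zero _ h z t hht, norm_zero]; linarith
      · rw [af_norm _ h z t hht]
        have h1 : |h t| ^ ((p/2) * z.re) ≤ max (|h t| ^ (0:ℝ)) (|h t| ^ (p/2)) := by
          apply rpow_le_max (abs_pos.mpr hht)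
          · nlinarith [hz01.1]
          · nlinarith [hz01.1, hz01.2]
        refine h1.trans ?_
        apply max_le
        · rw [Real.rpow_zero]; exact hK1
        · rw [hK]
          have : |h t| ^ (p/2) ≤ ∑ t', |h t'| ^ (p/2) :=
            Finset.single_le_sum (fun t' _ => Real.rpow_nonneg (abs_nonneg _) _) (mem_univ t)
          linarith
    exact Ff_norm_le z h w B (fun _ => 2*K) hB hD hdeg
  -- value at θ
  have hval : Ff ω p h w (((2:ℝ)/p : ℝ) : ℂ) = ((M : ℝ) : ℂ) := by
    have hfun : af (p/2) h (((2:ℝ)/p : ℝ) : ℂ) = fun t => ((h t : ℝ) : ℂ) := by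
      funext t
      by_cases hht : h t = 0
      · rw [af_norm_zero _ h _ t hht, hht, Complex.ofReal_zero]
      · rw [af_real (p/2) h ((2:ℝ)/p) t hht]
        have he : p/2 * (2/p) = 1 := by field_simp
        rw [he, Real.rpow_one, div_mul_cancel₀ _ (abs_ne_zero.mpr hht)]
    have hmz : ∑ t, ((nu ω t : ℝ) : ℂ) * ((h t : ℝ) : ℂ) = 0 := by
      have : ∑ t, ((nu ω t : ℝ) : ℂ) * ((h t : ℝ) : ℂ) = ((∑ t, nu ω t * h t : ℝ) : ℂ) := by
        push_cast
        rfl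
      rw [this, hmean, Complex.ofReal_zero]
    have hpt : (1:ℂ) - (((2:ℝ)/p : ℝ) : ℂ)/2 = (((1 - (2/p)/2 : ℝ)) : ℂ) := by
      push_cast
      ring
    rw [Ff, hfun]
    have hterm : ∀ s, ((nu ω s : ℝ) : ℂ) * (af p w (1 - (((2:ℝ)/p : ℝ) : ℂ)/2) s *
        (markovW ω (fun t => ((h t : ℝ) : ℂ)) s - ∑ t, ((nu ω t : ℝ) : ℂ) * ((h t : ℝ) : ℂ)))
        = (((nu ω s * |w s| ^ p : ℝ)) : ℂ) := by
      intro s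
      rw [markov_coe, hmz, sub_zero, ← hw]
      by_cases hws : w s = 0
      · rw [hpt, af_norm_zero p w _ s hws, hws]
        simp [Real.zero_rpow hp0.ne']
      · rw [hpt, af_real p w _ s hws]
        have he : p * (1 - (2/p)/2) = p - 1 := by field_simp
        rw [he]
        have habs : |w s| ≠ 0 := abs_ne_zero.mpr hws
        have hrp : |w s| ^ (p-1) * |w s| = |w s| ^ p := by
          nth_rewrite 2 [← Real.rpow_one |w s|]
          rw [← Real.rpow_add (abs_pos.mpr hws)]
          norm_num
        have hkey : w s / |w s| * |w s| ^ (p-1) * w s = |w s| ^ p := by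
          calc w s / |w s| * |w s| ^ (p-1) * w s
              = |w s| ^ (p-1) * (w s * w s) / |w s| := by ring
            _ = |w s| ^ (p-1) * (|w s| * |w s|) / |w s| := by rw [abs_mul_abs_self]
            _ = |w s| ^ (p-1) * |w s| := by rw [mul_div_assoc, mul_div_cancel_right₀ _ habs]
            _ = |w s| ^ p := hrp
        calc ((nu ω s : ℝ) : ℂ) * (((w s / |w s| * |w s| ^ (p-1) : ℝ) : ℂ) * ((w s : ℝ) : ℂ))
            = (((nu ω s * (w s / |w s| * |w s| ^ (p-1) * w s) : ℝ)) : ℂ) := by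
              push_cast
              ring
          _ = (((nu ω s * |w s| ^ p : ℝ)) : ℂ) := by rw [hkey]
    rw [Finset.sum_congr rfl fun s _ => hterm s, hM]
    push_cast
    rfl
  -- apply three lines
  have hstrip : (((2:ℝ)/p : ℝ) : ℂ) ∈ Complex.HadamardThreeLines.verticalClosedStrip 0 1 := by
    show Complex.re _ ∈ Set.Icc (0:ℝ) 1
    rw [Complex.ofReal_re]
    exact ⟨hθ0, hθ⟩
  have tl := Complex.HadamardThreeLines.norm_le_interp_of_mem_verticalClosedStrip₀₁'
    (Ff ω p h w) hstrip ((Ff_diff hp h w).diffContOnCl) hBdd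
    (fun z hz => ha z hz) (fun z hz => hb z hz)
  rw [hval, Complex.norm_real, Real.norm_eq_abs, abs_of_nonneg hM0, Complex.ofReal_re] at tl
  -- algebra
  have hMne : M ^ ((1:ℝ) - 1/p) > 0 := Real.rpow_pos_of_pos hMpos _
  have halg : (2*M) ^ (1 - (2:ℝ)/p) * (ε * M ^ ((1:ℝ)/2) * Hp ^ ((1:ℝ)/2)) ^ ((2:ℝ)/p)
      = M ^ ((1:ℝ) - 1/p) * ((2 ^ (1-(2:ℝ)/p) * ε ^ ((2:ℝ)/p)) * Hp ^ ((1:ℝ)/p)) := by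
    rw [Real.mul_rpow (by norm_num) hM0,
      Real.mul_rpow (mul_nonneg hε (Real.rpow_nonneg hM0 _)) (Real.rpow_nonneg hHp0 _),
      Real.mul_rpow hε (Real.rpow_nonneg hM0 _),
      ← Real.rpow_mul hM0, ← Real.rpow_mul hHp0]
    have e1 : (1:ℝ)/2 * (2/p) = 1/p := by ring
    rw [e1]
    have hMM : M ^ ((1:ℝ) - 1/p) = M ^ (1-(2:ℝ)/p) * M ^ ((1:ℝ)/p) := by
      rw [← Real.rpow_add hMpos]
      congr 1
      ring
    rw [hMM]
    ring
  rw [halg] at tl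
  have hsplit : M = M ^ ((1:ℝ) - 1/p) * M ^ ((1:ℝ)/p) := by
    rw [← Real.rpow_add hMpos]
    norm_num
  have tl2 : M ^ ((1:ℝ) - 1/p) * M ^ ((1:ℝ)/p)
      ≤ M ^ ((1:ℝ) - 1/p) * ((2 ^ (1-(2:ℝ)/p) * ε ^ ((2:ℝ)/p)) * Hp ^ ((1:ℝ)/p)) := by
    rw [← hsplit]
    exact tl
  exact le_of_mul_le_mul_left tl2 hMne


end Interp

section Assembly
variable {V : Type*} [Fintype V] {ω : V → V → ℝ} {p : ℝ}

lemma rpow_invp {X : ℝ} (hX : 0 ≤ X) (hp : p ≠ 0) : (X ^ ((1:ℝ)/p)) ^ p = X := by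
  rw [← Real.rpow_mul hX, one_div_mul_cancel hp, Real.rpow_one]

lemma markov_wavg (hdeg : ∀ s : V, 0 < wdeg ω s) (g : V → ℝ) (s : V) :
    ∑ t, (ω s t / wdeg ω s) * g t = markovW ω g s := by
  rw [markov_real, Finset.mul_sum]
  apply Finset.sum_congr rfl
  intro t _
  rw [div_mul_eq_mul_div, div_eq_inv_mul]

lemma sum_mu (hdeg : ∀ s : V, 0 < wdeg ω s) (s : V) :
    ∑ t, ω s t / wdeg ω s = 1 := by
  rw [← Finset.sum_div, ← wdeg, div_self (hdeg s).ne']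

lemma edgeP_eq (hdeg : ∀ s : V, 0 < wdeg ω s) (s t : V) :
    edgeP ω s t = nu ω s * (ω s t / wdeg ω s) := by
  rw [edgeP, nu]
  have : ∑ u, ∑ v, ω u v = ∑ u, wdeg ω u := rfl
  rw [this]
  rw [div_mul_div_comm, mul_comm (∑ u, wdeg ω u) (wdeg ω s), mul_div_mul_left _ _ (hdeg s).ne']

/-- the per-vertex averaged inequality -/
lemma avg_lemA (hp : 2 ≤ p) (μ : V → ℝ) (hμ : ∀ t, 0 ≤ μ t) (hμ1 : ∑ t, μ t = 1)
    (gg : V → ℝ) (b : ℝ) :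
    |b - ∑ t, μ t * gg t| ^ p
      + 2 ^ (2-p) * ∑ t, μ t * |(∑ t', μ t' * gg t') - gg t| ^ p
      ≤ ∑ t, μ t * |b - gg t| ^ p := by
  set m : ℝ := ∑ t, μ t * gg t with hm
  have key : ∀ t, μ t * (|b - m| ^ p + p * |b - m| ^ (p-2) * (b - m) * (m - gg t)
      + 2 ^ (2-p) * |m - gg t| ^ p) ≤ μ t * |b - gg t| ^ p := by
    intro t
    apply mul_le_mul_of_nonneg_left _ (hμ t)
    have := lemA hp (b - m) (m - gg t)
    rw [show b - m + (m - gg t) = b - gg t by ring] at this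
    exact this
  have hsum := Finset.sum_le_sum fun t (_ : t ∈ Finset.univ) => key t
  have expand : ∑ t, μ t * (|b - m| ^ p + p * |b - m| ^ (p-2) * (b - m) * (m - gg t)
      + 2 ^ (2-p) * |m - gg t| ^ p)
      = |b - m| ^ p + 2 ^ (2-p) * ∑ t, μ t * |m - gg t| ^ p := by
    have e1 : ∀ t, μ t * (|b - m| ^ p + p * |b - m| ^ (p-2) * (b - m) * (m - gg t)
        + 2 ^ (2-p) * |m - gg t| ^ p)
        = μ t * |b - m| ^ p + (p * |b - m| ^ (p-2) * (b - m)) * (μ t * m - μ t * gg t)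
          + 2 ^ (2-p) * (μ t * |m - gg t| ^ p) := by
      intro t
      ring
    rw [Finset.sum_congr rfl fun t _ => e1 t, Finset.sum_add_distrib, Finset.sum_add_distrib,
      ← Finset.sum_mul, ← Finset.mul_sum, ← Finset.mul_sum, hμ1, one_mul]
    have e2 : ∑ t, (μ t * m - μ t * gg t) = 0 := by
      rw [Finset.sum_sub_distrib, ← Finset.sum_mul, hμ1, one_mul, ← hm, sub_self]
    rw [e2, mul_zero, add_zero]
  rw [expand] at hsum
  exact hsum


lemma nu_mu_symm (hsym : SymmW ω) (hdeg : ∀ s : V, 0 < wdeg ω s) (s t : V) :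
    nu ω s * (ω s t / wdeg ω s) = nu ω t * (ω t s / wdeg ω t) := by
  rw [← edgeP_eq hdeg, ← edgeP_eq hdeg, edgeP, edgeP, hsym s t]

end Assembly

end Stmt8Aux

open Stmt8Aux

/-- if `‖A‖_{B(L²_0)} ≤ ε` with `2^{1−2/p} ε^{2/p} < 1`, then for every `f : V → ℝ`,
`2λ · inf_c ∑ ν(s)|f(s) − c|^p ≤ ∑ ℙ(s,t)|f(t) − f(s)|^p` with
`λ = (1 − 2^{1−2/p} ε^{2/p})^p (1/2 + 2^{1−p})` (i.e. `λ_{1,p}(𝒢) ≥ λ`). -/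
theorem stmt8 (p : ℝ) (hp : 2 ≤ p)
    {V : Type*} [Fintype V] (hV : 1 < Fintype.card V)
    (ω : V → V → ℝ) (hsym : SymmW ω) (hnn : NonnegW ω) (hconn : ConnW ω)
    (hdeg : ∀ s, 0 < wdeg ω s)
    (ε : ℝ) (hε : 0 ≤ ε)
    (hsmall : (2 : ℝ) ^ (1 - 2 / p) * ε ^ (2 / p) < 1)
    (hA : ∀ f : V → ℂ, (∑ s, (nu ω s : ℂ) * f s) = 0 →
      lpNormW ω 2 (markovW ω f) ≤ ε * lpNormW ω 2 f)
    (f : V → ℝ) :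
    2 * ((1 - (2 : ℝ) ^ (1 - 2 / p) * ε ^ (2 / p)) ^ p * (1 / 2 + (2 : ℝ) ^ (1 - p))) *
        (⨅ c : ℝ, ∑ s, nu ω s * |f s - c| ^ p)
      ≤ ∑ s, ∑ t, edgeP ω s t * |f t - f s| ^ p := by
  haveI : Nonempty V := Fintype.card_pos_iff.mp (by omega)
  have hp0 : (0:ℝ) < p := by linarith
  have hp1 : (1:ℝ) ≤ p := by linarith
  set δ : ℝ := (2:ℝ) ^ (1 - 2/p) * ε ^ (2/p) with hδ
  have hδ0 : 0 ≤ δ := mul_nonneg (Real.rpow_nonneg (by norm_num) _) (Real.rpow_nonneg hε _)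
  have hδ1 : δ < 1 := hsmall
  have hνnn : ∀ s : V, 0 ≤ nu ω s := fun s => (nu_pos hdeg s).le
  set m : ℝ := ∑ s, nu ω s * f s with hm
  set g : V → ℝ := fun s => f s - m with hg
  have hgmean : ∑ s, nu ω s * g s = 0 := by
    simp only [hg, mul_sub]
    rw [Finset.sum_sub_distrib, ← Finset.sum_mul, sum_nu hdeg, one_mul, ← hm, sub_self]
  set Sg : ℝ := ∑ s, nu ω s * |g s| ^ p with hSg
  have hSg0 : 0 ≤ Sg :=
    Finset.sum_nonneg fun s _ => mul_nonneg (hνnn s) (Real.rpow_nonneg (abs_nonneg _) _)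
  -- infimum step
  have hinf : (⨅ c : ℝ, ∑ s, nu ω s * |f s - c| ^ p) ≤ Sg := by
    have hbdd : BddBelow (Set.range fun c : ℝ => ∑ s, nu ω s * |f s - c| ^ p) := by
      refine ⟨0, ?_⟩
      rintro y ⟨c, rfl⟩
      exact Finset.sum_nonneg fun s _ => mul_nonneg (hνnn s) (Real.rpow_nonneg (abs_nonneg _) _)
    have := ciInf_le hbdd m
    rw [hSg]
    simpa [hg] using this
  -- interpolation bounds
  set A1 : V → ℝ := markovW ω g with hA1
  set A2 : V → ℝ := markovW ω A1 with hA2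
  have hkey1 := interp_key hp hnn hdeg hε hA g hgmean
  have hmean1 : ∑ s, nu ω s * A1 s = 0 := by
    rw [hA1]
    rw [show ∑ s, nu ω s * markovW ω g s = ∑ t, nu ω t * g t from mean_markov hsym hdeg g]
    exact hgmean
  have hkey2 := interp_key hp hnn hdeg hε hA A1 hmean1
  set NG : ℝ := Sg ^ ((1:ℝ)/p) with hNG
  have hNG0 : 0 ≤ NG := Real.rpow_nonneg hSg0 _
  set SA1 : ℝ := ∑ s, nu ω s * |A1 s| ^ p with hSA1
  set SA2 : ℝ := ∑ s, nu ω s * |A2 s| ^ p with hSA2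
  have hSA1_0 : 0 ≤ SA1 :=
    Finset.sum_nonneg fun s _ => mul_nonneg (hνnn s) (Real.rpow_nonneg (abs_nonneg _) _)
  have hNA1 : SA1 ^ ((1:ℝ)/p) ≤ δ * NG := hkey1
  have hNA2 : SA2 ^ ((1:ℝ)/p) ≤ δ * NG := by
    calc SA2 ^ ((1:ℝ)/p) ≤ δ * SA1 ^ ((1:ℝ)/p) := hkey2
      _ ≤ δ * (δ * NG) := mul_le_mul_of_nonneg_left hNA1 hδ0
      _ ≤ δ * NG := by nlinarith [Real.rpow_nonneg hSA1_0 ((1:ℝ)/p)]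
  -- Minkowski
  have mink : ∀ B : V → ℝ, (∑ s, nu ω s * |B s| ^ p) ^ ((1:ℝ)/p) ≤ δ * NG →
      (1 - δ) * NG ≤ (∑ s, nu ω s * |g s - B s| ^ p) ^ ((1:ℝ)/p) := by
    intro B hB
    have h := minkowski_w hp1 (nu ω) (fun s => g s - B s) B hνnn
    simp only [sub_add_cancel] at h
    have : NG ≤ (∑ s, nu ω s * |g s - B s| ^ p) ^ (1/p) + δ * NG := by
      refine le_trans ?_ (add_le_add_right hB _)
      rw [hNG, hSg]
      exact h
    linarith
  have hN1 := mink A1 hNA1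
  have hN2 := mink A2 hNA2
  set Sp1 : ℝ := ∑ s, nu ω s * |g s - A1 s| ^ p with hSp1d
  set Sp2 : ℝ := ∑ s, nu ω s * |g s - A2 s| ^ p with hSp2d
  have hSp1_0 : 0 ≤ Sp1 :=
    Finset.sum_nonneg fun s _ => mul_nonneg (hνnn s) (Real.rpow_nonneg (abs_nonneg _) _)
  have hSp2_0 : 0 ≤ Sp2 :=
    Finset.sum_nonneg fun s _ => mul_nonneg (hνnn s) (Real.rpow_nonneg (abs_nonneg _) _)
  have hδle1 : 0 ≤ 1 - δ := by linarith
  have pow_step : ∀ S : ℝ, 0 ≤ S → (1-δ) * NG ≤ S ^ ((1:ℝ)/p) → (1-δ)^p * Sg ≤ S := by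
    intro S hS hle
    have h1 : ((1-δ) * NG) ^ p ≤ (S ^ ((1:ℝ)/p)) ^ p :=
      Real.rpow_le_rpow (mul_nonneg hδle1 hNG0) hle hp0.le
    rw [rpow_invp hS hp0.ne'] at h1
    rw [Real.mul_rpow hδle1 hNG0, hNG, rpow_invp hSg0 hp0.ne'] at h1
    exact h1
  have hSp1ge : (1-δ)^p * Sg ≤ Sp1 := pow_step Sp1 hSp1_0 hN1
  have hSp2ge : (1-δ)^p * Sg ≤ Sp2 := pow_step Sp2 hSp2_0 hN2
  -- RHS lower bound
  have hRHS : Sp1 + 2 ^ (2-p) * Sp2 ≤ ∑ s, ∑ t, edgeP ω s t * |f t - f s| ^ p := by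
    have hμnn : ∀ s t : V, 0 ≤ ω s t / wdeg ω s := fun s t => div_nonneg (hnn s t) (hdeg s).le
    -- per-vertex bound
    have inner : ∀ s, nu ω s * (|g s - A1 s| ^ p
        + 2 ^ (2-p) * ∑ t, (ω s t / wdeg ω s) * |A1 s - g t| ^ p)
        ≤ ∑ t, edgeP ω s t * |f t - f s| ^ p := by
      intro s
      have havg := avg_lemA hp (fun t => ω s t / wdeg ω s) (hμnn s) (sum_mu hdeg s) g (g s)
      rw [markov_wavg hdeg g s, ← hA1] at havg
      have step := mul_le_mul_of_nonneg_left havg (hνnn s)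
      refine le_trans step (le_of_eq ?_)
      rw [Finset.mul_sum]
      apply Finset.sum_congr rfl
      intro t _
      rw [edgeP_eq hdeg]
      have e1 : g s - g t = f s - f t := by simp only [hg]; ring
      rw [e1, abs_sub_comm (f s) (f t)]
      ring
    have hsum := Finset.sum_le_sum fun s (_ : s ∈ Finset.univ) => inner s
    -- expand the left side
    set X : ℝ := ∑ s, nu ω s * ∑ t, (ω s t / wdeg ω s) * |A1 s - g t| ^ p with hX
    have expand : ∑ s, nu ω s * (|g s - A1 s| ^ p
        + 2 ^ (2-p) * ∑ t, (ω s t / wdeg ω s) * |A1 s - g t| ^ p)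
        = Sp1 + 2 ^ (2-p) * X := by
      rw [hSp1d, hX]
      rw [show ∀ (a : V → ℝ) (b : V → ℝ), (∑ s, nu ω s * (a s + 2 ^ (2-p) * b s))
        = ∑ s, (nu ω s * a s + 2 ^ (2-p) * (nu ω s * b s)) from fun a b =>
          Finset.sum_congr rfl fun s _ => by ring]
      rw [Finset.sum_add_distrib, ← Finset.mul_sum]
    rw [expand] at hsum
    -- bound X from below by Sp2
    have hXge : Sp2 ≤ X := by
      have hswap : X = ∑ t, nu ω t * ∑ s, (ω t s / wdeg ω t) * |A1 s - g t| ^ p := by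
        have e0 : ∀ s : V, nu ω s * ∑ t, (ω s t / wdeg ω s) * |A1 s - g t| ^ p
            = ∑ t, (nu ω s * (ω s t / wdeg ω s)) * |A1 s - g t| ^ p := by
          intro s
          rw [Finset.mul_sum]
          exact Finset.sum_congr rfl fun t _ => by ring
        rw [hX, Finset.sum_congr rfl fun s _ => e0 s, Finset.sum_comm]
        apply Finset.sum_congr rfl
        intro t _
        rw [Finset.mul_sum]
        apply Finset.sum_congr rfl
        intro s _
        rw [nu_mu_symm hsym hdeg s t]
        ring
      rw [hswap, hSp2d]
      apply Finset.sum_le_sum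
      intro t _
      apply mul_le_mul_of_nonneg_left _ (hνnn t)
      have hjen := jensen_abs_rpow hp1 (fun s => ω t s / wdeg ω t)
        (fun s => A1 s - g t) (hμnn t) (sum_mu hdeg t)
      have e2 : ∑ s, (ω t s / wdeg ω t) * (A1 s - g t) = A2 t - g t := by
        rw [show (∑ s, (ω t s / wdeg ω t) * (A1 s - g t))
          = ∑ s, ((ω t s / wdeg ω t) * A1 s - (ω t s / wdeg ω t) * g t) from
            Finset.sum_congr rfl fun s _ => by ring]
        rw [Finset.sum_sub_distrib, markov_wavg hdeg A1 t, ← hA2, ← Finset.sum_mul,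
          sum_mu hdeg t, one_mul]
      rw [e2] at hjen
      rw [abs_sub_comm (g t) (A2 t)]
      exact hjen
    have hc0' : (0:ℝ) ≤ 2 ^ (2-p) := Real.rpow_nonneg (by norm_num) _
    have := mul_le_mul_of_nonneg_left hXge hc0'
    linarith
  -- coefficient identity and final chain
  have h2p : (2:ℝ) ^ (2-p) = 2 * 2 ^ (1-p) := by
    rw [show (2:ℝ)-p = 1 + (1-p) by ring, Real.rpow_add two_pos, Real.rpow_one]
  have hc0 : (0:ℝ) ≤ 2 ^ (2-p) := Real.rpow_nonneg (by norm_num) _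
  have hcoeff : 0 ≤ 2 * ((1 - δ) ^ p * (1 / 2 + (2:ℝ) ^ (1 - p))) := by
    have := Real.rpow_nonneg hδle1 p
    have := Real.rpow_nonneg (show (0:ℝ) ≤ 2 by norm_num) (1-p)
    nlinarith
  calc 2 * ((1 - δ) ^ p * (1 / 2 + (2:ℝ) ^ (1 - p))) * (⨅ c : ℝ, ∑ s, nu ω s * |f s - c| ^ p)
      ≤ 2 * ((1 - δ) ^ p * (1 / 2 + (2:ℝ) ^ (1 - p))) * Sg := by
        exact mul_le_mul_of_nonneg_left hinf hcoeff
    _ = (1-δ)^p * Sg + 2 ^ (2-p) * ((1-δ)^p * Sg) := by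
        rw [h2p]; ring
    _ ≤ Sp1 + 2 ^ (2-p) * Sp2 :=
        add_le_add hSp1ge (mul_le_mul_of_nonneg_left hSp2ge hc0)
    _ ≤ ∑ s, ∑ t, edgeP ω s t * |f t - f s| ^ p := hRHS
end
end
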